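/- arXiv:1407.1169 — 3 statements merged into one kernel-verified Lean document; each statement's English description precedes it below -/
import Mathlib

section
/- Fix an integer N ≥ 1 and real phases φ = (φ_{jk})_{1≤j,k≤N}. For unit vectors ψ₁, ψ₂ ∈ ℂ^N define the N×N matrix μ(φ,ψ₁,ψ₂) with entries μ_{α₁α₂} = Σ_{l=1}^{N} exp(i(φ_{α₁ l} − φ_{α₂ l})) · ψ₁(α₁) · conj(ψ₁(α₂)) · |ψ₂(l)|². Then the average of Tr(μ²) over ψ₁ and ψ₂ taken as the first columns of two independent Haar-random unitaries in U(N) equals (N² + 2N³ + N⁴·Tr ρ(φ)²) / (N²(N+1)²), where ρ(φ) = A(φ)A(φ)†/N² and A(φ)_{jk} = exp(i φ_{jk}). -/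
set_option linter.unusedSectionVars false
open Matrix MeasureTheory

variable {N : ℕ}

noncomputable abbrev ent (U : Matrix.unitaryGroup (Fin N) ℂ) (i j : Fin N) : ℂ :=
  (U : Matrix (Fin N) (Fin N) ℂ) i j

lemma cont_ent (i j : Fin N) : Continuous (fun U : Matrix.unitaryGroup (Fin N) ℂ => ent U i j) := by
  have : Continuous (fun M : Matrix (Fin N) (Fin N) ℂ => M i j) :=
    (continuous_apply j).comp (continuous_apply i)
  exact this.comp continuous_subtype_val

lemma col_norm (U : Matrix.unitaryGroup (Fin N) ℂ) (j : Fin N) :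
    ∑ α, ent U α j * (starRingEnd ℂ) (ent U α j) = 1 := by
  have h := U.2
  rw [Unitary.mem_iff] at h
  have h1 := congrArg (fun M => M j j) h.1
  simp only [Matrix.mul_apply, Matrix.one_apply_eq, Matrix.star_apply] at h1
  simpa [mul_comm, Matrix.conjTranspose_apply] using h1

lemma ent_norm_le (U : Matrix.unitaryGroup (Fin N) ℂ) (i j : Fin N) : ‖ent U i j‖ ≤ 1 := by
  have h := col_norm U j
  have h2 : (∑ α, (‖ent U α j‖ : ℝ) ^ 2) = 1 := by
    have : ((∑ α, (‖ent U α j‖ : ℝ) ^ 2 : ℝ) : ℂ) = 1 := by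
      push_cast
      rw [← h]
      exact Finset.sum_congr rfl fun α _ => (Complex.mul_conj' _).symm
    exact_mod_cast this
  have hle : ‖ent U i j‖ ^ 2 ≤ 1 := by
    rw [← h2]
    exact Finset.single_le_sum (f := fun α => ‖ent U α j‖ ^ 2)
      (fun α _ => sq_nonneg _) (Finset.mem_univ i)
  nlinarith [norm_nonneg (ent U i j)]

/-- the quartic monomial -/
noncomputable def Fm (i j k l : Fin N) (j₀ : Fin N) (U : Matrix.unitaryGroup (Fin N) ℂ) : ℂ :=
  ent U i j₀ * ent U j j₀ * (starRingEnd ℂ) (ent U k j₀) * (starRingEnd ℂ) (ent U l j₀)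

lemma cont_Fm (i j k l j₀ : Fin N) : Continuous (Fm i j k l j₀) := by
  unfold Fm
  exact (((cont_ent i j₀).mul (cont_ent j j₀)).mul
    (Complex.continuous_conj.comp (cont_ent k j₀))).mul
    (Complex.continuous_conj.comp (cont_ent l j₀))

lemma Fm_norm_le (i j k l j₀ : Fin N) (U : Matrix.unitaryGroup (Fin N) ℂ) :
    ‖Fm i j k l j₀ U‖ ≤ 1 := by
  unfold Fm
  have h1 := ent_norm_le U i j₀
  have h2 := ent_norm_le U j j₀
  have h3 := ent_norm_le U k j₀
  have h4 := ent_norm_le U l j₀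
  rw [norm_mul, norm_mul, norm_mul, RCLike.norm_conj, RCLike.norm_conj]
  have hij : ‖ent U i j₀‖ * ‖ent U j j₀‖ ≤ 1 := mul_le_one₀ h1 (norm_nonneg _) h2
  have hijk : ‖ent U i j₀‖ * ‖ent U j j₀‖ * ‖ent U k j₀‖ ≤ 1 :=
    mul_le_one₀ hij (norm_nonneg _) h3
  exact mul_le_one₀ hijk (norm_nonneg _) h4

section Meas
variable [MeasurableSpace (Matrix.unitaryGroup (Fin N) ℂ)]
  [BorelSpace (Matrix.unitaryGroup (Fin N) ℂ)]
  (μ : Measure (Matrix.unitaryGroup (Fin N) ℂ)) [IsProbabilityMeasure μ]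

lemma integrable_of_cont_bound (f : Matrix.unitaryGroup (Fin N) ℂ → ℂ) (hf : Continuous f)
    (C : ℝ) (hb : ∀ U, ‖f U‖ ≤ C) : Integrable f μ :=
  (integrable_const C).mono' hf.aestronglyMeasurable (ae_of_all _ hb)

lemma integrable_Fm (i j k l j₀ : Fin N) : Integrable (Fm i j k l j₀) μ :=
  integrable_of_cont_bound μ _ (cont_Fm i j k l j₀) 1 (Fm_norm_le i j k l j₀)

instance : MeasurableMul (Matrix.unitaryGroup (Fin N) ℂ) := by
  constructor
  · intro c
    apply Continuous.measurable
    apply Continuous.subtype_mk (f := fun x : Matrix.unitaryGroup (Fin N) ℂ =>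
      (c : Matrix (Fin N) (Fin N) ℂ) * (x : Matrix (Fin N) (Fin N) ℂ))
    exact Continuous.matrix_mul continuous_const continuous_subtype_val
  · intro c
    apply Continuous.measurable
    apply Continuous.subtype_mk (f := fun x : Matrix.unitaryGroup (Fin N) ℂ =>
      (x : Matrix (Fin N) (Fin N) ℂ) * (c : Matrix (Fin N) (Fin N) ℂ))
    exact Continuous.matrix_mul continuous_subtype_val continuous_const

variable [μ.IsMulLeftInvariant]

end Meas

lemma sum_two {M : Type*} [AddCommMonoid M] {p q : Fin N} (h : p ≠ q) (A B : Fin N → M) :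
    ∑ j, (if j = p then A j else if j = q then B j else 0) = A p + B q := by
  have key : ∀ j : Fin N, (if j = p then A j else if j = q then B j else 0) =
      (if j = p then A p else 0) + (if j = q then B q else 0) := by
    intro j
    split_ifs with h1 h2 <;> simp_all
  rw [Finset.sum_congr rfl fun j _ => key j, Finset.sum_add_distrib]
  simp [Finset.sum_ite_eq']

/-- permutation unitary -/
noncomputable def permU (σ : Equiv.Perm (Fin N)) : Matrix.unitaryGroup (Fin N) ℂ :=
  ⟨σ.permMatrix ℂ, by
    rw [Matrix.mem_unitaryGroup_iff]
    have hstar : star (σ.permMatrix ℂ) = (σ⁻¹).permMatrix ℂ := by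
      ext i j
      simp [Matrix.star_apply, Equiv.Perm.permMatrix, PEquiv.toMatrix_apply,
        Equiv.toPEquiv_apply, Option.mem_def, eq_comm, Equiv.eq_symm_apply]
    rw [hstar]
    rw [show (σ.permMatrix ℂ : Matrix (Fin N) (Fin N) ℂ) * (σ⁻¹).permMatrix ℂ =
        ((σ.toPEquiv.trans (σ⁻¹).toPEquiv).toMatrix : Matrix (Fin N) (Fin N) ℂ) from
      (PEquiv.toMatrix_trans _ _).symm]
    rw [← Equiv.toPEquiv_trans]
    simp only [Equiv.self_trans_symm, Equiv.Perm.inv_def]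
    rw [Equiv.toPEquiv_refl]
    exact PEquiv.toMatrix_refl⟩

lemma ent_permU (σ : Equiv.Perm (Fin N)) (U : Matrix.unitaryGroup (Fin N) ℂ) (i j : Fin N) :
    ((permU σ * U : Matrix.unitaryGroup (Fin N) ℂ) : Matrix (Fin N) (Fin N) ℂ) i j
      = (U : Matrix (Fin N) (Fin N) ℂ) (σ i) j := by
  have : ((permU σ * U : Matrix.unitaryGroup (Fin N) ℂ) : Matrix (Fin N) (Fin N) ℂ)
      = (σ.permMatrix ℂ) * (U : Matrix (Fin N) (Fin N) ℂ) := rfl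
  rw [this, PEquiv.toMatrix_toPEquiv_mul]
  rfl

/-- diagonal phase unitary -/
noncomputable def diagU (d : Fin N → ℂ) (hd : ∀ i, d i * (starRingEnd ℂ) (d i) = 1) :
    Matrix.unitaryGroup (Fin N) ℂ :=
  ⟨Matrix.diagonal d, by
    rw [Matrix.mem_unitaryGroup_iff]
    have : star (Matrix.diagonal d) = Matrix.diagonal (fun i => (starRingEnd ℂ) (d i)) := by
      rw [Matrix.star_eq_conjTranspose, Matrix.diagonal_conjTranspose]
      rfl
    rw [this, Matrix.diagonal_mul_diagonal]
    simp only [hd]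
    exact Matrix.diagonal_one⟩

lemma ent_diagU (d : Fin N → ℂ) (hd : ∀ i, d i * (starRingEnd ℂ) (d i) = 1)
    (U : Matrix.unitaryGroup (Fin N) ℂ) (i j : Fin N) :
    ((diagU d hd * U : Matrix.unitaryGroup (Fin N) ℂ) : Matrix (Fin N) (Fin N) ℂ) i j
      = d i * (U : Matrix (Fin N) (Fin N) ℂ) i j := by
  have : ((diagU d hd * U : Matrix.unitaryGroup (Fin N) ℂ) : Matrix (Fin N) (Fin N) ℂ)
      = (Matrix.diagonal d) * (U : Matrix (Fin N) (Fin N) ℂ) := rfl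
  rw [this, Matrix.diagonal_mul]

noncomputable def rc : ℂ := ((Real.sqrt 2 : ℝ) : ℂ)⁻¹

lemma rc_conj : (starRingEnd ℂ) rc = rc := by
  unfold rc
  rw [map_inv₀, Complex.conj_ofReal]

lemma rc_sq : rc * rc = (2 : ℂ)⁻¹ := by
  unfold rc
  rw [← mul_inv, ← Complex.ofReal_mul, Real.mul_self_sqrt (by norm_num)]
  norm_num

noncomputable def rotM (p q : Fin N) : Matrix (Fin N) (Fin N) ℂ :=
  Matrix.of fun i j =>
    if i = p then (if j = p then rc else if j = q then rc else 0)
    else if i = q then (if j = p then -rc else if j = q then rc else 0)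
    else if j = i then 1 else 0

lemma sum_prod_two {p q : Fin N} (hpq : p ≠ q) (a1 b1 a2 b2 : ℂ) :
    ∑ j, (if j = p then a1 else if j = q then b1 else 0) *
      (starRingEnd ℂ) (if j = p then a2 else if j = q then b2 else 0) =
      a1 * (starRingEnd ℂ) a2 + b1 * (starRingEnd ℂ) b2 := by
  rw [← sum_two hpq (fun _ => a1 * (starRingEnd ℂ) a2) (fun _ => b1 * (starRingEnd ℂ) b2)]
  exact Finset.sum_congr rfl fun j _ => by split_ifs <;> simp

lemma sum_prod_mixR {p q k : Fin N} (hkp : k ≠ p) (hkq : k ≠ q) (a b : ℂ) :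
    ∑ j, (if j = p then a else if j = q then b else 0) *
      (starRingEnd ℂ) (if j = k then 1 else 0) = 0 := by
  rw [show (0:ℂ) = ∑ _j : Fin N, 0 from (Finset.sum_const_zero).symm]
  exact Finset.sum_congr rfl fun j _ => by split_ifs <;> simp_all

lemma sum_prod_mixL {p q i : Fin N} (hip : i ≠ p) (hiq : i ≠ q) (a b : ℂ) :
    ∑ j, (if j = i then (1:ℂ) else 0) *
      (starRingEnd ℂ) (if j = p then a else if j = q then b else 0) = 0 := by
  rw [show (0:ℂ) = ∑ _j : Fin N, 0 from (Finset.sum_const_zero).symm]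
  exact Finset.sum_congr rfl fun j _ => by split_ifs <;> simp_all

lemma rotM_row_p (p q : Fin N) (j : Fin N) :
    rotM p q p j = if j = p then rc else if j = q then rc else 0 := by simp [rotM]

lemma rotM_row_q {p q : Fin N} (hpq : p ≠ q) (j : Fin N) :
    rotM p q q j = if j = p then -rc else if j = q then rc else 0 := by
  simp [rotM, hpq.symm]

lemma rotM_row_other {p q i : Fin N} (hip : i ≠ p) (hiq : i ≠ q) (j : Fin N) :
    rotM p q i j = if j = i then 1 else 0 := by simp [rotM, hip, hiq]


lemma rotM_mem {p q : Fin N} (hpq : p ≠ q) : rotM p q ∈ Matrix.unitaryGroup (Fin N) ℂ := by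
  rw [Matrix.mem_unitaryGroup_iff]
  ext i k
  rw [Matrix.mul_apply]
  simp only [Matrix.star_apply, Matrix.one_apply]
  have hstar : ∀ z : ℂ, star z = (starRingEnd ℂ) z := fun _ => rfl
  simp only [hstar]
  rcases eq_or_ne i p with hip | hip
  · rcases eq_or_ne k p with hkp | hkp
    · rw [Finset.sum_congr rfl fun j _ => by rw [hip, hkp, rotM_row_p]]
      rw [sum_prod_two hpq, rc_conj, rc_sq, if_pos (hip.trans hkp.symm)]
      norm_num
    · rcases eq_or_ne k q with hkq | hkq
      · rw [Finset.sum_congr rfl fun j _ => by rw [hip, hkq, rotM_row_p, rotM_row_q hpq]]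
        rw [sum_prod_two hpq, map_neg, rc_conj, if_neg (by rw [hip, hkq]; exact hpq)]
        ring
      · rw [Finset.sum_congr rfl fun j _ => by rw [hip, rotM_row_p, rotM_row_other hkp hkq]]
        rw [sum_prod_mixR hkp hkq, if_neg (by rw [hip]; exact Ne.symm hkp)]
  · rcases eq_or_ne i q with hiq | hiq
    · rcases eq_or_ne k p with hkp | hkp
      · rw [Finset.sum_congr rfl fun j _ => by rw [hiq, hkp, rotM_row_q hpq, rotM_row_p]]
        rw [sum_prod_two hpq, rc_conj, if_neg (by rw [hiq, hkp]; exact Ne.symm hpq)]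
        ring
      · rcases eq_or_ne k q with hkq | hkq
        · rw [Finset.sum_congr rfl fun j _ => by rw [hiq, hkq, rotM_row_q hpq]]
          rw [sum_prod_two hpq, map_neg, rc_conj, if_pos (hiq.trans hkq.symm)]
          rw [neg_mul_neg, rc_sq]
          norm_num
        · rw [Finset.sum_congr rfl fun j _ => by
            rw [hiq, rotM_row_q hpq, rotM_row_other hkp hkq]]
          rw [sum_prod_mixR hkp hkq, if_neg (by rw [hiq]; exact Ne.symm hkq)]
    · rcases eq_or_ne k p with hkp | hkp
      · rw [Finset.sum_congr rfl fun j _ => by rw [hkp, rotM_row_p, rotM_row_other hip hiq]]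
        rw [sum_prod_mixL hip hiq, if_neg (by rw [hkp]; exact hip)]
      · rcases eq_or_ne k q with hkq | hkq
        · rw [Finset.sum_congr rfl fun j _ => by
            rw [hkq, rotM_row_q hpq, rotM_row_other hip hiq]]
          rw [sum_prod_mixL hip hiq, if_neg (by rw [hkq]; exact hiq)]
        · rw [Finset.sum_congr rfl fun j _ => by
            rw [rotM_row_other hip hiq, rotM_row_other hkp hkq]]
          have key : ∀ j : Fin N, (if j = i then (1:ℂ) else 0) *
              (starRingEnd ℂ) (if j = k then 1 else 0) =
              if j = i then (if i = k then 1 else 0) else 0 := by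
            intro j; split_ifs <;> simp_all
          rw [Finset.sum_congr rfl fun j _ => key j, Finset.sum_ite_eq']
          simp

noncomputable def rotU {p q : Fin N} (hpq : p ≠ q) : Matrix.unitaryGroup (Fin N) ℂ :=
  ⟨rotM p q, rotM_mem hpq⟩

lemma ent_rotU {p q : Fin N} (hpq : p ≠ q) (U : Matrix.unitaryGroup (Fin N) ℂ) (j : Fin N) :
    ent (rotU hpq * U) p j = rc * ent U p j + rc * ent U q j := by
  have hco : ent (rotU hpq * U) p j
      = ((rotM p q) * (U : Matrix (Fin N) (Fin N) ℂ)) p j := rfl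
  rw [hco, Matrix.mul_apply]
  rw [Finset.sum_congr rfl fun j' _ => by rw [rotM_row_p]]
  have key : ∀ j' : Fin N,
      (if j' = p then rc else if j' = q then rc else 0) * (U : Matrix (Fin N) (Fin N) ℂ) j' j =
      (if j' = p then rc * (U : Matrix (Fin N) (Fin N) ℂ) j' j
       else if j' = q then rc * (U : Matrix (Fin N) (Fin N) ℂ) j' j else 0) := by
    intro j'; split_ifs <;> simp
  rw [Finset.sum_congr rfl fun j' _ => key j', sum_two hpq]

section Moment

variable [MeasurableSpace (Matrix.unitaryGroup (Fin N) ℂ)]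
  [BorelSpace (Matrix.unitaryGroup (Fin N) ℂ)]
  (μ : Measure (Matrix.unitaryGroup (Fin N) ℂ)) [IsProbabilityMeasure μ]
  [μ.IsMulLeftInvariant]

noncomputable def Wm (j₀ : Fin N) (i j k l : Fin N) : ℂ := ∫ U, Fm i j k l j₀ U ∂μ

lemma Wm_perm (j₀ : Fin N) (σ : Equiv.Perm (Fin N)) (i j k l : Fin N) :
    Wm μ j₀ (σ i) (σ j) (σ k) (σ l) = Wm μ j₀ i j k l := by
  unfold Wm
  conv_rhs => rw [← MeasureTheory.integral_mul_left_eq_self (Fm i j k l j₀) (permU σ)]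
  congr 1
  funext U
  unfold Fm ent
  rw [ent_permU, ent_permU, ent_permU, ent_permU]

lemma Wm_phase (j₀ : Fin N) (p : Fin N) (i j k l : Fin N) :
    Wm μ j₀ i j k l =
      ((if i = p then Complex.I else 1) * (if j = p then Complex.I else 1) *
        (starRingEnd ℂ) (if k = p then Complex.I else 1) *
        (starRingEnd ℂ) (if l = p then Complex.I else 1)) * Wm μ j₀ i j k l := by
  set d : Fin N → ℂ := fun x => if x = p then Complex.I else 1 with hd_def
  have hd : ∀ x, d x * (starRingEnd ℂ) (d x) = 1 := by
    intro x; simp only [hd_def]; split_ifs <;> simp [Complex.mul_conj']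
  unfold Wm
  conv_lhs => rw [← MeasureTheory.integral_mul_left_eq_self (Fm i j k l j₀) (diagU d hd)]
  have key : ∀ U, Fm i j k l j₀ (diagU d hd * U) =
      (d i * d j * (starRingEnd ℂ) (d k) * (starRingEnd ℂ) (d l)) * Fm i j k l j₀ U := by
    intro U
    unfold Fm ent
    rw [ent_diagU, ent_diagU, ent_diagU, ent_diagU, _root_.map_mul, _root_.map_mul]
    ring
  rw [show (fun U => Fm i j k l j₀ (diagU d hd * U)) =
      (fun U => (d i * d j * (starRingEnd ℂ) (d k) * (starRingEnd ℂ) (d l)) * Fm i j k l j₀ U)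
    from funext key]
  rw [MeasureTheory.integral_const_mul]

lemma Wm_vanish (j₀ : Fin N) (p : Fin N) (i j k l : Fin N)
    (h : ((if i = p then Complex.I else 1) * (if j = p then Complex.I else 1) *
        (starRingEnd ℂ) (if k = p then Complex.I else 1) *
        (starRingEnd ℂ) (if l = p then Complex.I else 1)) ≠ 1) :
    Wm μ j₀ i j k l = 0 := by
  have hph := Wm_phase μ j₀ p i j k l
  set c := ((if i = p then Complex.I else 1) * (if j = p then Complex.I else 1) *
        (starRingEnd ℂ) (if k = p then Complex.I else 1) *
        (starRingEnd ℂ) (if l = p then Complex.I else 1)) with hc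
  have : (1 - c) * Wm μ j₀ i j k l = 0 := by linear_combination hph
  rcases mul_eq_zero.mp this with h1 | h2
  · exact absurd (by linear_combination -h1) h
  · exact h2


lemma Wm_swap_kl (j₀ i j k l : Fin N) : Wm μ j₀ i j l k = Wm μ j₀ i j k l := by
  unfold Wm; congr 1; funext U; unfold Fm; ring

lemma Wm_swap_ij (j₀ i j k l : Fin N) : Wm μ j₀ j i k l = Wm μ j₀ i j k l := by
  unfold Wm; congr 1; funext U; unfold Fm; ring

lemma Wm_rot (j₀ : Fin N) {p q : Fin N} (hpq : p ≠ q) :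
    Wm μ j₀ p p p p = 2 * Wm μ j₀ p q p q := by
  classical
  set e : Fin 2 → Fin N := ![p, q] with he
  have hpoint : ∀ U, Fm p p p p j₀ (rotU hpq * U) =
      (4:ℂ)⁻¹ * ∑ z : (Fin 2 × Fin 2) × Fin 2 × Fin 2,
        Fm (e z.1.1) (e z.1.2) (e z.2.1) (e z.2.2) j₀ U := by
    intro U
    unfold Fm
    rw [ent_rotU hpq U j₀]
    rw [_root_.map_add, _root_.map_mul, _root_.map_mul, rc_conj]
    simp only [Fintype.sum_prod_type, Fin.sum_univ_two, he, Matrix.cons_val_zero,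
      Matrix.cons_val_one, Matrix.head_cons]
    have h2 : rc * rc = (2:ℂ)⁻¹ := rc_sq
    linear_combination (rc * rc + (2:ℂ)⁻¹) *
      ((ent U p j₀ + ent U q j₀) * (ent U p j₀ + ent U q j₀) *
        (((starRingEnd ℂ) (ent U p j₀)) + ((starRingEnd ℂ) (ent U q j₀))) *
        (((starRingEnd ℂ) (ent U p j₀)) + ((starRingEnd ℂ) (ent U q j₀)))) * h2
  have hint : ∫ U, Fm p p p p j₀ (rotU hpq * U) ∂μ = Wm μ j₀ p p p p :=
    MeasureTheory.integral_mul_left_eq_self _ _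
  rw [show (fun U => Fm p p p p j₀ (rotU hpq * U)) =
      fun U => (4:ℂ)⁻¹ * ∑ z : (Fin 2 × Fin 2) × Fin 2 × Fin 2,
        Fm (e z.1.1) (e z.1.2) (e z.2.1) (e z.2.2) j₀ U from funext hpoint] at hint
  rw [MeasureTheory.integral_const_mul,
    MeasureTheory.integral_finset_sum _
      (fun z _ => integrable_Fm μ (e z.1.1) (e z.1.2) (e z.2.1) (e z.2.2) j₀)] at hint
  have hexp : ∑ z : (Fin 2 × Fin 2) × Fin 2 × Fin 2,
      ∫ U, Fm (e z.1.1) (e z.1.2) (e z.2.1) (e z.2.2) j₀ U ∂μ =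
      ∑ z : (Fin 2 × Fin 2) × Fin 2 × Fin 2,
      Wm μ j₀ (e z.1.1) (e z.1.2) (e z.2.1) (e z.2.2) := rfl
  rw [hexp, Fintype.sum_prod_type] at hint
  simp only [Fintype.sum_prod_type, Fin.sum_univ_two, he, Matrix.cons_val_zero,
    Matrix.cons_val_one, Matrix.head_cons] at hint
  -- helper ne facts
  have hI : Complex.I ≠ 1 := by
    intro h; have := congrArg Complex.im h; simp at this
  have hnI : -Complex.I ≠ 1 := by
    intro h; have := congrArg Complex.im h; simp at this
  have hn1 : (-1 : ℂ) ≠ 1 := by norm_num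
  have hqp := Ne.symm hpq
  -- vanishing terms
  have v : ∀ i j k l : Fin N,
      ((if i = p then Complex.I else 1) * (if j = p then Complex.I else 1) *
        (starRingEnd ℂ) (if k = p then Complex.I else 1) *
        (starRingEnd ℂ) (if l = p then Complex.I else 1)) ≠ 1 →
      Wm μ j₀ i j k l = 0 := fun i j k l h => Wm_vanish μ j₀ p i j k l h
  have vpppq : Wm μ j₀ p p p q = 0 := v p p p q (by
    simp [hqp, Complex.conj_I]; norm_num; exact hI)
  have vppqp : Wm μ j₀ p p q p = 0 := v p p q p (by
    simp [hqp, Complex.conj_I]; norm_num; exact hI)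
  have vppqq : Wm μ j₀ p p q q = 0 := v p p q q (by
    simp [hqp, Complex.conj_I]; norm_num)
  have vpqpp : Wm μ j₀ p q p p = 0 := v p q p p (by
    simp [hqp, Complex.conj_I]; norm_num; exact hnI)
  have vqppp : Wm μ j₀ q p p p = 0 := v q p p p (by
    simp [hqp, Complex.conj_I]; norm_num; exact hnI)
  have vpqqq : Wm μ j₀ p q q q = 0 := v p q q q (by
    simp [hqp, Complex.conj_I]; norm_num; exact hI)
  have vqpqq : Wm μ j₀ q p q q = 0 := v q p q q (by
    simp [hqp, Complex.conj_I]; norm_num; exact hI)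
  have vqqpp : Wm μ j₀ q q p p = 0 := v q q p p (by
    simp [hqp, Complex.conj_I]; norm_num)
  have vqqpq : Wm μ j₀ q q p q = 0 := v q q p q (by
    simp [hqp, Complex.conj_I]; norm_num; exact hnI)
  have vqqqp : Wm μ j₀ q q q p = 0 := v q q q p (by
    simp [hqp, Complex.conj_I]; norm_num; exact hnI)
  have hswap : Wm μ j₀ q q q q = Wm μ j₀ p p p p := by
    have := Wm_perm μ j₀ (Equiv.swap p q) p p p p
    simpa using this
  have hb1 : Wm μ j₀ p q q p = Wm μ j₀ p q p q := Wm_swap_kl μ j₀ p q p q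
  have hb2 : Wm μ j₀ q p p q = Wm μ j₀ p q p q := Wm_swap_ij μ j₀ p q p q
  have hb3 : Wm μ j₀ q p q p = Wm μ j₀ p q p q := by
    have h1 : Wm μ j₀ q p q p = Wm μ j₀ p q q p := Wm_swap_ij μ j₀ p q q p
    rw [h1, hb1]
  rw [vpppq, vppqp, vppqq, vpqpp, vqppp, vpqqq, vqpqq, vqqpp, vqqpq, vqqqp,
    hswap, hb1, hb2, hb3] at hint
  linear_combination (-2 : ℂ) * hint


lemma Wm_norm (j₀ : Fin N) : ∑ α : Fin N, ∑ β : Fin N, Wm μ j₀ α β α β = 1 := by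
  have key : ∀ U, ∑ α : Fin N, ∑ β : Fin N, Fm α β α β j₀ U = 1 := by
    intro U
    have h := col_norm U j₀
    have h1 : ∀ α β : Fin N, Fm α β α β j₀ U =
        (ent U α j₀ * (starRingEnd ℂ) (ent U α j₀)) *
        (ent U β j₀ * (starRingEnd ℂ) (ent U β j₀)) := by
      intro α β; unfold Fm; ring
    calc ∑ α : Fin N, ∑ β : Fin N, Fm α β α β j₀ U
        = ∑ α : Fin N, ∑ β : Fin N, (ent U α j₀ * (starRingEnd ℂ) (ent U α j₀)) *
            (ent U β j₀ * (starRingEnd ℂ) (ent U β j₀)) :=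
          Finset.sum_congr rfl fun α _ => Finset.sum_congr rfl fun β _ => h1 α β
      _ = (∑ α : Fin N, ent U α j₀ * (starRingEnd ℂ) (ent U α j₀)) *
            (∑ β : Fin N, ent U β j₀ * (starRingEnd ℂ) (ent U β j₀)) := by
          rw [Finset.sum_mul]
          exact Finset.sum_congr rfl fun α _ => by rw [Finset.mul_sum]
      _ = 1 := by rw [h, one_mul]
  have step1 : ∀ α : Fin N, ∑ β : Fin N, Wm μ j₀ α β α β =
      ∫ U, ∑ β : Fin N, Fm α β α β j₀ U ∂μ := fun α =>
    (MeasureTheory.integral_finset_sum _ fun β _ => integrable_Fm μ α β α β j₀).symm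
  rw [Finset.sum_congr rfl fun α _ => step1 α]
  rw [← MeasureTheory.integral_finset_sum _ fun α _ =>
    integrable_finset_sum _ fun β _ => integrable_Fm μ α β α β j₀]
  rw [show (fun U => ∑ α : Fin N, ∑ β : Fin N, Fm α β α β j₀ U) = fun _ => (1:ℂ) from
    funext key]
  simp

lemma Wm_moment (hN : 0 < N) (j₀ : Fin N) (α β : Fin N) :
    Wm μ j₀ α β α β = (1 + if α = β then 1 else 0) / ((N:ℂ) * ((N:ℂ) + 1)) := by
  rcases eq_or_lt_of_le (show 1 ≤ N from hN) with h1 | h2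
  · -- N = 1
    have h1' : N = 1 := h1.symm
    subst h1'
    have hab : α = β := Subsingleton.elim α β
    rw [if_pos hab, hab]
    have hone : ∀ U : Matrix.unitaryGroup (Fin 1) ℂ, Fm β β β β j₀ U = 1 := by
      intro U
      have h := col_norm U j₀
      rw [Fin.sum_univ_one] at h
      have hβ : β = 0 := Subsingleton.elim β 0
      unfold Fm
      rw [hβ]
      linear_combination (ent U 0 j₀ * (starRingEnd ℂ) (ent U 0 j₀) + 1) * h
    unfold Wm
    rw [show (fun U : Matrix.unitaryGroup (Fin 1) ℂ => Fm β β β β j₀ U) = fun _ => (1:ℂ) from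
      funext hone]
    simp
  · -- N ≥ 2
    set p : Fin N := ⟨0, hN⟩ with hp
    set q : Fin N := ⟨1, h2⟩ with hq
    have hpq : p ≠ q := by simp [hp, hq, Fin.ext_iff]
    have ha : ∀ γ : Fin N, Wm μ j₀ γ γ γ γ = Wm μ j₀ p p p p := by
      intro γ
      have := Wm_perm μ j₀ (Equiv.swap γ p) p p p p
      simpa using this
    have hb : ∀ γ δ : Fin N, γ ≠ δ → Wm μ j₀ γ δ γ δ = Wm μ j₀ p q p q := by
      intro γ δ hgd
      set σ₁ := Equiv.swap p γ with hσ₁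
      set σ₂ := Equiv.swap (σ₁ q) δ with hσ₂
      have hq1 : σ₁ q ≠ γ := by
        intro h
        have : σ₁ q = σ₁ p := by rw [h, hσ₁, Equiv.swap_apply_left]
        exact (Ne.symm hpq) (σ₁.injective this)
      have h1 : (σ₁.trans σ₂) p = γ := by
        rw [Equiv.trans_apply, hσ₁, Equiv.swap_apply_left, hσ₂]
        exact Equiv.swap_apply_of_ne_of_ne (Ne.symm hq1) hgd
      have h2 : (σ₁.trans σ₂) q = δ := by
        rw [Equiv.trans_apply, hσ₂, Equiv.swap_apply_left]
      have := Wm_perm μ j₀ (σ₁.trans σ₂) p q p q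
      rw [h1, h2] at this
      exact this
    have hrot := Wm_rot μ j₀ hpq
    have hnorm := Wm_norm μ j₀
    set a := Wm μ j₀ p p p p with ha'
    set b := Wm μ j₀ p q p q with hb'
    have hsum : ∑ α' : Fin N, ∑ β' : Fin N, Wm μ j₀ α' β' α' β' =
        (N : ℂ) * ((N : ℂ) * b + (a - b)) := by
      rw [Finset.sum_congr rfl fun α' _ => ?_]
      · rw [Finset.sum_const, Finset.card_univ, Fintype.card_fin, nsmul_eq_mul]
      · -- inner sum
        have : ∀ β' : Fin N, Wm μ j₀ α' β' α' β' =
            b + (if β' = α' then a - b else 0) := by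
          intro β'
          rcases eq_or_ne β' α' with h | h
          · rw [if_pos h, h, ha α']; ring
          · rw [if_neg h, hb α' β' (Ne.symm h)]; ring
        rw [Finset.sum_congr rfl fun β' _ => this β', Finset.sum_add_distrib,
          Finset.sum_const, Finset.card_univ, Fintype.card_fin, nsmul_eq_mul,
          Finset.sum_ite_eq' Finset.univ α' (fun _ => a - b)]
        simp
    rw [hsum] at hnorm
    have hNne : (N : ℂ) ≠ 0 := Nat.cast_ne_zero.mpr hN.ne'
    have hN1ne : (N : ℂ) + 1 ≠ 0 := by
      have : ((N + 1 : ℕ) : ℂ) ≠ 0 := Nat.cast_ne_zero.mpr (Nat.succ_ne_zero N)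
      push_cast at this
      exact this
    have hbval : b = ((N:ℂ) * ((N:ℂ) + 1))⁻¹ := by
      have hmul : (N:ℂ) * ((N:ℂ) + 1) * b = 1 := by linear_combination hnorm - (N:ℂ) * hrot
      exact eq_inv_of_mul_eq_one_left (by linear_combination hmul)
    rcases eq_or_ne α β with h | h
    · rw [if_pos h, h, ha β, hrot, hbval]
      rw [inv_eq_one_div]
      ring
    · rw [if_neg h, hb α β h, hbval]
      rw [inv_eq_one_div]
      ring

end Moment

/-- The unimodular matrix with phases `φ`: entries `exp(i φ_{jk})`. -/
noncomputable def uniMat (N : ℕ) (φ : Fin N × Fin N → ℝ) : Matrix (Fin N) (Fin N) ℂ :=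
  Matrix.of fun j k => Complex.exp (Complex.I * (φ (j, k) : ℂ))

/-- The random-phase density matrix `ρ(φ) = A(φ) A(φ)ᴴ / N²`. -/
noncomputable def uniRho (N : ℕ) (φ : Fin N × Fin N → ℝ) : Matrix (Fin N) (Fin N) ℂ :=
  ((N : ℂ) ^ 2)⁻¹ • (uniMat N φ * (uniMat N φ)ᴴ)

/-- The reduced density matrix `μ(φ,ψ₁,ψ₂)` obtained by applying the diagonal unitary
with phases `exp(i φ_{αl})` to `ψ₁ ⊗ ψ₂` and tracing out the second factor:
`μ_{α₁α₂} = Σ_l exp(i(φ_{α₁l} − φ_{α₂l})) ψ₁(α₁) conj(ψ₁(α₂)) |ψ₂(l)|²`. -/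
noncomputable def rdm (N : ℕ) (φ : Fin N × Fin N → ℝ) (ψ₁ ψ₂ : Fin N → ℂ) :
    Matrix (Fin N) (Fin N) ℂ :=
  Matrix.of fun α₁ α₂ => ∑ l,
    Complex.exp (Complex.I * ((φ (α₁, l) : ℂ) - (φ (α₂, l) : ℂ))) *
      ψ₁ α₁ * (starRingEnd ℂ) (ψ₁ α₂) * (‖ψ₂ l‖ : ℂ) ^ 2

noncomputable def gq (N : ℕ) (φ : Fin N × Fin N → ℝ)
    (z : (Fin N × Fin N) × Fin N × Fin N) : ℂ :=
  Complex.exp (Complex.I * ((φ (z.1.1, z.2.1) : ℂ) - (φ (z.1.2, z.2.1) : ℂ))) *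
  Complex.exp (Complex.I * ((φ (z.1.2, z.2.2) : ℂ) - (φ (z.1.1, z.2.2) : ℂ)))

lemma gq_diag1 (φ : Fin N × Fin N → ℝ) (a l l' : Fin N) :
    gq N φ ((a, a), (l, l')) = 1 := by
  simp [gq]

lemma gq_diag2 (φ : Fin N × Fin N → ℝ) (a1 a2 l : Fin N) :
    gq N φ ((a1, a2), (l, l)) = 1 := by
  unfold gq
  rw [← Complex.exp_add]
  rw [show Complex.I * ((φ (a1, l) : ℂ) - (φ (a2, l) : ℂ)) +
    Complex.I * ((φ (a2, l) : ℂ) - (φ (a1, l) : ℂ)) = 0 from by ring]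
  exact Complex.exp_zero

lemma traceExpand (φ : Fin N × Fin N → ℝ) (ψ₁ ψ₂ : Fin N → ℂ) :
    Matrix.trace (rdm N φ ψ₁ ψ₂ * rdm N φ ψ₁ ψ₂) =
      ∑ z : (Fin N × Fin N) × Fin N × Fin N,
        gq N φ z * (ψ₁ z.1.1 * (starRingEnd ℂ) (ψ₁ z.1.1)) *
          (ψ₁ z.1.2 * (starRingEnd ℂ) (ψ₁ z.1.2)) *
          (ψ₂ z.2.1 * (starRingEnd ℂ) (ψ₂ z.2.1)) *
          (ψ₂ z.2.2 * (starRingEnd ℂ) (ψ₂ z.2.2)) := by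
  rw [Fintype.sum_prod_type]
  simp only [Fintype.sum_prod_type]
  rw [Matrix.trace]
  simp only [Matrix.diag_apply, Matrix.mul_apply, rdm, Matrix.of_apply]
  refine Finset.sum_congr rfl fun a1 _ => ?_
  refine Finset.sum_congr rfl fun a2 _ => ?_
  rw [Finset.sum_mul_sum]
  refine Finset.sum_congr rfl fun l _ => ?_
  refine Finset.sum_congr rfl fun l' _ => ?_
  rw [← Complex.mul_conj' (ψ₂ l), ← Complex.mul_conj' (ψ₂ l')]
  unfold gq
  ring

lemma trace_rho_sq (φ : Fin N × Fin N → ℝ) :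
    Matrix.trace (uniRho N φ * uniRho N φ) =
      (((N : ℂ) ^ 2)⁻¹ * ((N : ℂ) ^ 2)⁻¹) *
        ∑ z : (Fin N × Fin N) × Fin N × Fin N, gq N φ z := by
  unfold uniRho
  rw [Matrix.smul_mul, Matrix.mul_smul, Matrix.trace_smul, Matrix.trace_smul, smul_smul,
    smul_eq_mul]
  congr 1
  rw [Fintype.sum_prod_type]
  simp only [Fintype.sum_prod_type]
  rw [Matrix.trace]
  simp only [Matrix.diag_apply, Matrix.mul_apply, Matrix.conjTranspose_apply, uniMat,
    Matrix.of_apply]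
  refine Finset.sum_congr rfl fun a1 _ => ?_
  refine Finset.sum_congr rfl fun a2 _ => ?_
  rw [Finset.sum_mul_sum]
  refine Finset.sum_congr rfl fun l _ => ?_
  refine Finset.sum_congr rfl fun l' _ => ?_
  unfold gq
  have hc : ∀ x : ℝ, (starRingEnd ℂ) (Complex.exp (Complex.I * (x:ℂ))) =
      Complex.exp (-(Complex.I * (x:ℂ))) := by
    intro x
    rw [← Complex.exp_conj, _root_.map_mul, Complex.conj_I, Complex.conj_ofReal, neg_mul]
  have hstar : ∀ z : ℂ, star z = (starRingEnd ℂ) z := fun _ => rfl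
  simp only [hstar]
  rw [hc, hc]
  rw [← Complex.exp_add, ← Complex.exp_add, ← Complex.exp_add, ← Complex.exp_add]
  congr 1
  ring


lemma sum_gq_d1 (φ : Fin N × Fin N → ℝ) :
    ∑ z : (Fin N × Fin N) × Fin N × Fin N,
      gq N φ z * (if z.1.1 = z.1.2 then (1:ℂ) else 0) = (N:ℂ)^3 := by
  rw [Fintype.sum_prod_type]
  simp only [Fintype.sum_prod_type]
  have step : ∀ a1 a2 : Fin N,
      (∑ l, ∑ l', gq N φ ((a1,a2),(l,l')) * (if a1 = a2 then (1:ℂ) else 0)) =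
      if a1 = a2 then ((N:ℂ)^2) else 0 := by
    intro a1 a2
    split_ifs with h
    · subst h
      simp only [gq_diag1, mul_one, one_mul]
      simp [Finset.card_univ]
      ring
    · simp
  rw [Finset.sum_congr rfl fun a1 _ => Finset.sum_congr rfl fun a2 _ => step a1 a2]
  rw [Finset.sum_congr rfl fun a1 _ =>
    Finset.sum_ite_eq Finset.univ a1 (fun _ => ((N:ℂ)^2))]
  simp [Finset.card_univ]
  ring

lemma sum_gq_d2 (φ : Fin N × Fin N → ℝ) :
    ∑ z : (Fin N × Fin N) × Fin N × Fin N,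
      gq N φ z * (if z.2.1 = z.2.2 then (1:ℂ) else 0) = (N:ℂ)^3 := by
  rw [Fintype.sum_prod_type]
  simp only [Fintype.sum_prod_type]
  have step : ∀ (a1 a2 l : Fin N),
      (∑ l', gq N φ ((a1,a2),(l,l')) * (if l = l' then (1:ℂ) else 0)) = 1 := by
    intro a1 a2 l
    simp only [mul_ite, mul_one, mul_zero]
    rw [Finset.sum_ite_eq Finset.univ l (fun l' => gq N φ ((a1,a2),(l,l')))]
    simp [gq_diag2]
  rw [Finset.sum_congr rfl fun a1 _ => Finset.sum_congr rfl fun a2 _ =>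
    Finset.sum_congr rfl fun l _ => step a1 a2 l]
  simp [Finset.card_univ]
  ring

lemma sum_gq_d12 (φ : Fin N × Fin N → ℝ) :
    ∑ z : (Fin N × Fin N) × Fin N × Fin N,
      gq N φ z * ((if z.1.1 = z.1.2 then (1:ℂ) else 0) *
        (if z.2.1 = z.2.2 then (1:ℂ) else 0)) = (N:ℂ)^2 := by
  rw [Fintype.sum_prod_type]
  simp only [Fintype.sum_prod_type]
  have step : ∀ a1 a2 : Fin N,
      (∑ l, ∑ l', gq N φ ((a1,a2),(l,l')) * ((if a1 = a2 then (1:ℂ) else 0) *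
        (if l = l' then (1:ℂ) else 0))) = if a1 = a2 then ((N:ℂ)) else 0 := by
    intro a1 a2
    split_ifs with h
    · subst h
      simp only [if_pos rfl, one_mul]
      have inner : ∀ l : Fin N,
          (∑ l', gq N φ ((a1,a1),(l,l')) * (if l = l' then (1:ℂ) else 0)) = 1 := by
        intro l
        simp only [mul_ite, mul_one, mul_zero]
        rw [Finset.sum_ite_eq Finset.univ l (fun l' => gq N φ ((a1,a1),(l,l')))]
        simp [gq_diag2]
      rw [Finset.sum_congr rfl fun l _ => inner l]
      simp [Finset.card_univ]
    · simp
  rw [Finset.sum_congr rfl fun a1 _ => Finset.sum_congr rfl fun a2 _ => step a1 a2]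
  rw [Finset.sum_congr rfl fun a1 _ =>
    Finset.sum_ite_eq Finset.univ a1 (fun _ => ((N:ℂ)))]
  simp [Finset.card_univ]
  ring

/-- averaging `Tr(μ²)` over `ψ₁, ψ₂` — first columns of two independent
Haar-random unitaries — gives `(N² + 2N³ + N⁴ Tr ρ(φ)²)/(N²(N+1)²)`. -/
theorem avg_purity_reduced_state (N : ℕ) (hN : 0 < N)
    [MeasurableSpace (Matrix.unitaryGroup (Fin N) ℂ)]
    [BorelSpace (Matrix.unitaryGroup (Fin N) ℂ)]
    (μ : Measure (Matrix.unitaryGroup (Fin N) ℂ))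
    [IsProbabilityMeasure μ] [μ.IsMulLeftInvariant]
    (φ : Fin N × Fin N → ℝ) :
    (∫ U₁, ∫ U₂,
        Matrix.trace
          (rdm N φ (fun α => (U₁ : Matrix (Fin N) (Fin N) ℂ) α ⟨0, hN⟩)
              (fun l => (U₂ : Matrix (Fin N) (Fin N) ℂ) l ⟨0, hN⟩) *
            rdm N φ (fun α => (U₁ : Matrix (Fin N) (Fin N) ℂ) α ⟨0, hN⟩)
              (fun l => (U₂ : Matrix (Fin N) (Fin N) ℂ) l ⟨0, hN⟩)) ∂μ ∂μ) =
      ((N : ℂ) ^ 2 + 2 * (N : ℂ) ^ 3 +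
          (N : ℂ) ^ 4 * Matrix.trace (uniRho N φ * uniRho N φ)) /
        ((N : ℂ) ^ 2 * ((N : ℂ) + 1) ^ 2) := by
  classical
  set j0 : Fin N := ⟨0, hN⟩ with hj0
  obtain ⟨c, hc⟩ : ∃ c : ℂ, c = (N:ℂ) * ((N:ℂ) + 1) := ⟨_, rfl⟩
  have hm : ∀ a b : Fin N, Wm μ j0 a b a b = (1 + if a = b then 1 else 0) / c := by
    rw [hc]; exact fun a b => Wm_moment μ hN j0 a b
  have hA : ∀ U₁ : Matrix.unitaryGroup (Fin N) ℂ,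
      (∫ U₂, Matrix.trace
          (rdm N φ (fun α => ent U₁ α j0) (fun l => ent U₂ l j0) *
            rdm N φ (fun α => ent U₁ α j0) (fun l => ent U₂ l j0)) ∂μ) =
      ∑ z : (Fin N × Fin N) × Fin N × Fin N,
        (gq N φ z * ((1 + if z.2.1 = z.2.2 then 1 else 0) / c)) *
          Fm z.1.1 z.1.2 z.1.1 z.1.2 j0 U₁ := by
    intro U₁
    have hpt : (fun U₂ : Matrix.unitaryGroup (Fin N) ℂ =>
        Matrix.trace
          (rdm N φ (fun α => ent U₁ α j0) (fun l => ent U₂ l j0) *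
            rdm N φ (fun α => ent U₁ α j0) (fun l => ent U₂ l j0))) =
        fun U₂ => ∑ z : (Fin N × Fin N) × Fin N × Fin N,
          (gq N φ z * Fm z.1.1 z.1.2 z.1.1 z.1.2 j0 U₁) *
            Fm z.2.1 z.2.2 z.2.1 z.2.2 j0 U₂ := by
      funext U₂
      rw [traceExpand]
      exact Finset.sum_congr rfl fun z _ => by unfold Fm ent; ring
    rw [hpt, MeasureTheory.integral_finset_sum _
      (fun z _ => (integrable_Fm μ z.2.1 z.2.2 z.2.1 z.2.2 j0).const_mul _)]
    refine Finset.sum_congr rfl fun z _ => ?_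
    rw [MeasureTheory.integral_const_mul]
    rw [show (∫ U₂, Fm z.2.1 z.2.2 z.2.1 z.2.2 j0 U₂ ∂μ) =
      Wm μ j0 z.2.1 z.2.2 z.2.1 z.2.2 from rfl]
    rw [hm]
    ring
  rw [show (fun U₁ : Matrix.unitaryGroup (Fin N) ℂ => ∫ U₂, Matrix.trace
          (rdm N φ (fun α => ent U₁ α j0) (fun l => ent U₂ l j0) *
            rdm N φ (fun α => ent U₁ α j0) (fun l => ent U₂ l j0)) ∂μ) =
      fun U₁ => ∑ z : (Fin N × Fin N) × Fin N × Fin N,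
        (gq N φ z * ((1 + if z.2.1 = z.2.2 then 1 else 0) / c)) *
          Fm z.1.1 z.1.2 z.1.1 z.1.2 j0 U₁ from funext hA]
  rw [MeasureTheory.integral_finset_sum _
    (fun z _ => (integrable_Fm μ z.1.1 z.1.2 z.1.1 z.1.2 j0).const_mul _)]
  have hper : ∀ z : (Fin N × Fin N) × Fin N × Fin N,
      (∫ U₁, (gq N φ z * ((1 + if z.2.1 = z.2.2 then 1 else 0) / c)) *
        Fm z.1.1 z.1.2 z.1.1 z.1.2 j0 U₁ ∂μ) =
      gq N φ z * (((1 + if z.1.1 = z.1.2 then 1 else 0) / c) *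
        ((1 + if z.2.1 = z.2.2 then 1 else 0) / c)) := by
    intro z
    rw [MeasureTheory.integral_const_mul]
    rw [show (∫ U₁, Fm z.1.1 z.1.2 z.1.1 z.1.2 j0 U₁ ∂μ) =
      Wm μ j0 z.1.1 z.1.2 z.1.1 z.1.2 from rfl]
    rw [hm]
    ring
  rw [Finset.sum_congr rfl fun z _ => hper z]
  -- final algebra
  have expand : ∀ z : (Fin N × Fin N) × Fin N × Fin N,
      gq N φ z * (((1 + if z.1.1 = z.1.2 then 1 else 0) / c) *
        ((1 + if z.2.1 = z.2.2 then 1 else 0) / c)) =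
      (gq N φ z + gq N φ z * (if z.1.1 = z.1.2 then (1:ℂ) else 0) +
        gq N φ z * (if z.2.1 = z.2.2 then (1:ℂ) else 0) +
        gq N φ z * ((if z.1.1 = z.1.2 then (1:ℂ) else 0) *
          (if z.2.1 = z.2.2 then (1:ℂ) else 0))) * (c * c)⁻¹ := by
    intro z
    ring
  rw [Finset.sum_congr rfl fun z _ => expand z, ← Finset.sum_mul]
  rw [Finset.sum_add_distrib, Finset.sum_add_distrib, Finset.sum_add_distrib]
  rw [sum_gq_d1 φ, sum_gq_d2 φ, sum_gq_d12 φ]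
  rw [trace_rho_sq φ]
  have hNne : (N : ℂ) ≠ 0 := Nat.cast_ne_zero.mpr hN.ne'
  have hN1ne : (N : ℂ) + 1 ≠ 0 := by
    have : ((N + 1 : ℕ) : ℂ) ≠ 0 := Nat.cast_ne_zero.mpr (Nat.succ_ne_zero N)
    push_cast at this
    exact this
  rw [hc]
  field_simp
  ring
end

section
/- Fix an integer N ≥ 1. For real phases φ = (φ_{jk})_{1≤j,k≤N} and unit vectors ψ₁, ψ₂ ∈ ℂ^N define μ(φ,ψ₁,ψ₂) with entries μ_{α₁α₂} = Σ_{l=1}^{N} exp(i(φ_{α₁ l} − φ_{α₂ l})) · ψ₁(α₁) · conj(ψ₁(α₂)) · |ψ₂(l)|². Then the triple average of 1 − Tr(μ²) — over φ uniform on [0,2π]^{N²} with the product measure (dφ_{jk}/2π), and over ψ₁, ψ₂ taken as the first columns of two independent Haar-random unitaries in U(N) — equals ((N−1)/(N+1))². This is the mean entangling power of a random diagonal bipartite unitary gate. -/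
set_option linter.unusedSectionVars false


open Matrix MeasureTheory

variable {N : ℕ}

private def pmat (σ : Equiv.Perm (Fin N)) : Matrix (Fin N) (Fin N) ℂ :=
  Matrix.of fun i j => if σ i = j then 1 else 0

private lemma pmat_mem (σ : Equiv.Perm (Fin N)) : pmat σ ∈ Matrix.unitaryGroup (Fin N) ℂ := by
  rw [Matrix.mem_unitaryGroup_iff]
  ext i j
  simp only [Matrix.mul_apply, Matrix.star_apply, pmat, Matrix.of_apply, Matrix.one_apply,
    apply_ite (star : ℂ → ℂ), star_one, star_zero, ite_mul, one_mul, zero_mul]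
  rw [Finset.sum_ite_eq Finset.univ (σ i) (fun k => if σ j = k then 1 else 0)]
  simp [EmbeddingLike.apply_eq_iff_eq, eq_comm]

private lemma pmat_mul (σ : Equiv.Perm (Fin N)) (U : Matrix (Fin N) (Fin N) ℂ) (i j : Fin N) :
    (pmat σ * U) i j = U (σ i) j := by
  simp only [Matrix.mul_apply, pmat, Matrix.of_apply, ite_mul, one_mul, zero_mul]
  rw [Finset.sum_ite_eq Finset.univ (σ i) (fun k => U k j)]
  simp

private lemma sum_two_s17 {x y : Fin N} (hxy : x ≠ y) (p q r s : ℂ) :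
    ∑ k, (if k = x then p else if k = y then q else 0) *
      (if k = x then r else if k = y then s else 0) = p * r + q * s := by
  classical
  rw [← Finset.sum_subset (Finset.subset_univ {x, y})]
  · rw [Finset.sum_pair hxy]
    simp [hxy, Ne.symm hxy]
  · intro k _ hk
    simp only [Finset.mem_insert, Finset.mem_singleton, not_or] at hk
    simp [hk.1, hk.2]

private lemma sum_mul_delta (j : Fin N) (f : Fin N → ℂ) :
    ∑ k, f k * (if j = k then 1 else 0) = f j := by
  simp [mul_ite, Finset.sum_ite_eq]

private lemma sum_delta_mul (i : Fin N) (f : Fin N → ℂ) :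
    ∑ k, (if i = k then 1 else 0) * f k = f i := by
  simp [ite_mul, Finset.sum_ite_eq]

private def rmat (x y : Fin N) (a b : ℂ) : Matrix (Fin N) (Fin N) ℂ :=
  Matrix.of fun i j =>
    if i = x then (if j = x then a else if j = y then b else 0)
    else if i = y then (if j = x then -(starRingEnd ℂ) b else if j = y then (starRingEnd ℂ) a else 0)
    else if i = j then 1 else 0

private lemma rmat_x {x y : Fin N} (a b : ℂ) (k : Fin N) :
    rmat x y a b x k = if k = x then a else if k = y then b else 0 := by
  simp [rmat]

private lemma rmat_y {x y : Fin N} (hxy : x ≠ y) (a b : ℂ) (k : Fin N) :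
    rmat x y a b y k =
      if k = x then -(starRingEnd ℂ) b else if k = y then (starRingEnd ℂ) a else 0 := by
  simp [rmat, if_neg (Ne.symm hxy)]

private lemma rmat_o {x y i : Fin N} (hix : i ≠ x) (hiy : i ≠ y) (a b : ℂ) (k : Fin N) :
    rmat x y a b i k = if i = k then 1 else 0 := by
  simp [rmat, if_neg hix, if_neg hiy]

private lemma rmat_mem {x y : Fin N} (hxy : x ≠ y) {a b : ℂ}
    (h : a * (starRingEnd ℂ) a + b * (starRingEnd ℂ) b = 1) :
    rmat x y a b ∈ Matrix.unitaryGroup (Fin N) ℂ := by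
  have hh : ∀ z : ℂ, star z = (starRingEnd ℂ) z := fun _ => rfl
  rw [Matrix.mem_unitaryGroup_iff]
  ext i j
  rw [Matrix.mul_apply, Matrix.one_apply]
  simp only [Matrix.star_apply]
  by_cases hix : i = x
  · rw [hix]
    by_cases hjx : j = x
    · rw [hjx, if_pos rfl]
      simp only [rmat_x, apply_ite (star : ℂ → ℂ), star_zero]
      rw [sum_two_s17 hxy]
      exact h
    · by_cases hjy : j = y
      · rw [hjy, if_neg hxy]
        simp only [rmat_x, rmat_y hxy, apply_ite (star : ℂ → ℂ), star_zero, star_neg]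
        rw [sum_two_s17 hxy]
        simp only [hh, Complex.conj_conj]
        ring
      · rw [if_neg (fun hq => hjx hq.symm)]
        simp only [rmat_x, rmat_o hjx hjy, apply_ite (star : ℂ → ℂ), star_zero, star_one]
        rw [sum_mul_delta j (fun k => if k = x then a else if k = y then b else 0)]
        rw [if_neg hjx, if_neg hjy]
  · by_cases hiy : i = y
    · rw [hiy]
      by_cases hjx : j = x
      · rw [hjx, if_neg (Ne.symm hxy)]
        simp only [rmat_x, rmat_y hxy, apply_ite (star : ℂ → ℂ), star_zero]
        rw [sum_two_s17 hxy]
        simp only [hh, Complex.conj_conj]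
        ring
      · by_cases hjy : j = y
        · rw [hjy, if_pos rfl]
          simp only [rmat_y hxy, apply_ite (star : ℂ → ℂ), star_zero, star_neg]
          rw [sum_two_s17 hxy]
          simp only [hh, Complex.conj_conj]
          calc -(starRingEnd ℂ) b * -b + (starRingEnd ℂ) a * a
              = a * (starRingEnd ℂ) a + b * (starRingEnd ℂ) b := by ring
            _ = 1 := h
        · rw [if_neg (fun hq => hjy hq.symm)]
          simp only [rmat_y hxy, rmat_o hjx hjy, apply_ite (star : ℂ → ℂ), star_zero, star_one]
          rw [sum_mul_delta j
            (fun k => if k = x then -(starRingEnd ℂ) b else if k = y then (starRingEnd ℂ) a else 0)]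
          rw [if_neg hjx, if_neg hjy]
    · simp only [rmat_o hix hiy]
      rw [sum_delta_mul i (fun k => star (rmat x y a b j k))]
      by_cases hjx : j = x
      · rw [hjx, rmat_x, if_neg hix, if_neg hiy, star_zero, if_neg hix]
      · by_cases hjy : j = y
        · rw [hjy, rmat_y hxy, if_neg hix, if_neg hiy, star_zero,
            if_neg hiy]
        · rw [rmat_o hjx hjy]
          by_cases hij : i = j
          · rw [if_pos hij, if_pos hij.symm, star_one]
          · rw [if_neg hij, if_neg (Ne.symm hij), star_zero]

private lemma rmat_mul_x {x y : Fin N} (hxy : x ≠ y) (a b : ℂ) (U : Matrix (Fin N) (Fin N) ℂ)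
    (j : Fin N) : (rmat x y a b * U) x j = a * U x j + b * U y j := by
  rw [Matrix.mul_apply]
  simp only [rmat_x]
  rw [← Finset.sum_subset (Finset.subset_univ {x, y})]
  · rw [Finset.sum_pair hxy]
    simp [hxy, Ne.symm hxy]
  · intro k _ hk
    simp only [Finset.mem_insert, Finset.mem_singleton, not_or] at hk
    simp [hk.1, hk.2]

private lemma rmat_mul_y {x y : Fin N} (hxy : x ≠ y) (a b : ℂ) (U : Matrix (Fin N) (Fin N) ℂ)
    (j : Fin N) :
    (rmat x y a b * U) y j = -(starRingEnd ℂ) b * U x j + (starRingEnd ℂ) a * U y j := by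
  rw [Matrix.mul_apply]
  simp only [rmat_y hxy]
  rw [← Finset.sum_subset (Finset.subset_univ {x, y})]
  · rw [Finset.sum_pair hxy]
    simp [hxy, Ne.symm hxy]
  · intro k _ hk
    simp only [Finset.mem_insert, Finset.mem_singleton, not_or] at hk
    simp [hk.1, hk.2]

section UG
variable [MeasurableSpace (Matrix.unitaryGroup (Fin N) ℂ)]
  [BorelSpace (Matrix.unitaryGroup (Fin N) ℂ)]
  (μ : Measure (Matrix.unitaryGroup (Fin N) ℂ))
  [IsProbabilityMeasure μ] [μ.IsMulLeftInvariant]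

private lemma cont_entry (α β : Fin N) :
    Continuous fun U : Matrix.unitaryGroup (Fin N) ℂ => (U : Matrix (Fin N) (Fin N) ℂ) α β :=
  (continuous_apply β).comp ((continuous_apply α).comp continuous_subtype_val)

private lemma col_sum (U : Matrix.unitaryGroup (Fin N) ℂ) (z : Fin N) :
    ∑ k, ‖(U : Matrix (Fin N) (Fin N) ℂ) k z‖ ^ 2 = 1 := by
  have hm := (Unitary.mem_iff.mp U.2).1
  have h2 : (star (U : Matrix (Fin N) (Fin N) ℂ) * (U : Matrix (Fin N) (Fin N) ℂ)) z z
      = (1 : Matrix (Fin N) (Fin N) ℂ) z z := by rw [hm]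
  rw [Matrix.mul_apply, Matrix.one_apply_eq] at h2
  have h3 : ∀ k, (star (U : Matrix (Fin N) (Fin N) ℂ)) z k * (U : Matrix (Fin N) (Fin N) ℂ) k z
      = ((‖(U : Matrix (Fin N) (Fin N) ℂ) k z‖ ^ 2 : ℝ) : ℂ) := by
    intro k
    rw [Matrix.star_apply]
    rw [show (star ((U : Matrix (Fin N) (Fin N) ℂ) k z)) = (starRingEnd ℂ) ((U :
      Matrix (Fin N) (Fin N) ℂ) k z) from rfl]
    rw [mul_comm, Complex.mul_conj]
    norm_cast
    rw [Complex.normSq_eq_norm_sq]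
  rw [Finset.sum_congr rfl (fun k _ => h3 k), ← Complex.ofReal_sum] at h2
  exact_mod_cast h2

private lemma entry_sq_le (U : Matrix.unitaryGroup (Fin N) ℂ) (α z : Fin N) :
    ‖(U : Matrix (Fin N) (Fin N) ℂ) α z‖ ^ 2 ≤ 1 := by
  rw [← col_sum U z]
  exact Finset.single_le_sum (f := fun k => ‖(U : Matrix (Fin N) (Fin N) ℂ) k z‖ ^ 2)
    (fun k _ => by positivity) (Finset.mem_univ α)

private lemma integrable_of_bdd {f : Matrix.unitaryGroup (Fin N) ℂ → ℝ} (hf : Continuous f)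
    (C : ℝ) (hC : ∀ U, |f U| ≤ C) : Integrable f μ :=
  (integrable_const C).mono' hf.aestronglyMeasurable
    (Filter.Eventually.of_forall fun U => by simpa using hC U)

private noncomputable def mom (z α β : Fin N) : ℝ :=
  ∫ U, ‖(U : Matrix (Fin N) (Fin N) ℂ) α z‖ ^ 2 * ‖(U : Matrix (Fin N) (Fin N) ℂ) β z‖ ^ 2 ∂μ

private lemma integrable_mom (z α β : Fin N) :
    Integrable (fun U : Matrix.unitaryGroup (Fin N) ℂ =>
      ‖(U : Matrix (Fin N) (Fin N) ℂ) α z‖ ^ 2 * ‖(U : Matrix (Fin N) (Fin N) ℂ) β z‖ ^ 2) μ := by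
  apply integrable_of_bdd μ (((cont_entry α z).norm.pow 2).mul ((cont_entry β z).norm.pow 2)) 1
  intro U
  rw [_root_.abs_of_nonneg (mul_nonneg (sq_nonneg _) (sq_nonneg _))]
  exact mul_le_one₀ (entry_sq_le U α z) (sq_nonneg _) (entry_sq_le U β z)


private lemma mom_perm (z α β : Fin N) (σ : Equiv.Perm (Fin N)) :
    mom μ z (σ α) (σ β) = mom μ z α β := by
  have key := integral_mul_left_eq_self
    (μ := μ)
    (f := fun U : Matrix.unitaryGroup (Fin N) ℂ =>
      ‖(U : Matrix (Fin N) (Fin N) ℂ) α z‖ ^ 2 * ‖(U : Matrix (Fin N) (Fin N) ℂ) β z‖ ^ 2)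
    ⟨pmat σ, pmat_mem σ⟩
  have hpt : ∀ U : Matrix.unitaryGroup (Fin N) ℂ,
      ‖((⟨pmat σ, pmat_mem σ⟩ * U : Matrix.unitaryGroup (Fin N) ℂ) :
        Matrix (Fin N) (Fin N) ℂ) α z‖ ^ 2 *
      ‖((⟨pmat σ, pmat_mem σ⟩ * U : Matrix.unitaryGroup (Fin N) ℂ) :
        Matrix (Fin N) (Fin N) ℂ) β z‖ ^ 2
      = ‖(U : Matrix (Fin N) (Fin N) ℂ) (σ α) z‖ ^ 2 *
        ‖(U : Matrix (Fin N) (Fin N) ℂ) (σ β) z‖ ^ 2 := by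
    intro U
    rw [show ((⟨pmat σ, pmat_mem σ⟩ * U : Matrix.unitaryGroup (Fin N) ℂ) :
      Matrix (Fin N) (Fin N) ℂ) = pmat σ * (U : Matrix (Fin N) (Fin N) ℂ) from rfl]
    rw [pmat_mul, pmat_mul]
  unfold mom
  rw [← key]
  exact integral_congr_ae (Filter.Eventually.of_forall fun U => (hpt U).symm)

private lemma four_norm (u v : ℂ) :
    ‖u + v‖ ^ 2 * ‖u + v‖ ^ 2 + ‖u - v‖ ^ 2 * ‖u - v‖ ^ 2 +
      (‖u + Complex.I * v‖ ^ 2 * ‖u + Complex.I * v‖ ^ 2 +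
        ‖u - Complex.I * v‖ ^ 2 * ‖u - Complex.I * v‖ ^ 2) =
    4 * (‖u‖ ^ 2 * ‖u‖ ^ 2) + 4 * (‖v‖ ^ 2 * ‖v‖ ^ 2) + 16 * (‖u‖ ^ 2 * ‖v‖ ^ 2) := by
  have hsq : ∀ z : ℂ, ‖z‖ ^ 2 = z.re ^ 2 + z.im ^ 2 := by
    intro z
    rw [Complex.sq_norm, Complex.normSq_apply]
    ring
  simp only [hsq, Complex.add_re, Complex.add_im, Complex.sub_re, Complex.sub_im,
    Complex.mul_re, Complex.mul_im, Complex.I_re, Complex.I_im]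
  ring

private lemma entry_le (U : Matrix.unitaryGroup (Fin N) ℂ) (α z : Fin N) :
    ‖(U : Matrix (Fin N) (Fin N) ℂ) α z‖ ≤ 1 := by
  have h := entry_sq_le U α z
  nlinarith [norm_nonneg ((U : Matrix (Fin N) (Fin N) ℂ) α z)]

private lemma rot_int (z x y : Fin N) (hxy : x ≠ y) (c : ℂ) (hc : c * (starRingEnd ℂ) c = 1) :
    ∫ U : Matrix.unitaryGroup (Fin N) ℂ,
      (‖(U : Matrix (Fin N) (Fin N) ℂ) x z + c * (U : Matrix (Fin N) (Fin N) ℂ) y z‖ ^ 2 *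
        ‖(U : Matrix (Fin N) (Fin N) ℂ) x z + c * (U : Matrix (Fin N) (Fin N) ℂ) y z‖ ^ 2 +
      ‖(U : Matrix (Fin N) (Fin N) ℂ) x z - c * (U : Matrix (Fin N) (Fin N) ℂ) y z‖ ^ 2 *
        ‖(U : Matrix (Fin N) (Fin N) ℂ) x z - c * (U : Matrix (Fin N) (Fin N) ℂ) y z‖ ^ 2) ∂μ
    = 4 * (mom μ z x x + mom μ z y y) := by
  have hcn : ‖c‖ = 1 := by
    have h1 : ((Complex.normSq c : ℝ) : ℂ) = 1 := by rw [← Complex.mul_conj]; exact hc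
    have h2 : Complex.normSq c = 1 := by exact_mod_cast h1
    have h3 : ‖c‖ ^ 2 = 1 := by
      rw [Complex.sq_norm]; exact h2
    nlinarith [norm_nonneg c]
  set a : ℂ := (((Real.sqrt 2)⁻¹ : ℝ) : ℂ) with ha_def
  have ha2 : (Real.sqrt 2)⁻¹ * (Real.sqrt 2)⁻¹ = 2⁻¹ := by
    rw [← mul_inv]
    rw [Real.mul_self_sqrt (by norm_num)]
  have haa : a * (starRingEnd ℂ) a = 2⁻¹ := by
    rw [ha_def, Complex.conj_ofReal, ← Complex.ofReal_mul, ha2]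
    norm_num
  set b : ℂ := c * a with hb_def
  have hmem : a * (starRingEnd ℂ) a + b * (starRingEnd ℂ) b = 1 := by
    rw [hb_def, show (starRingEnd ℂ) (c * a) = (starRingEnd ℂ) c * (starRingEnd ℂ) a from
      (starRingEnd ℂ).map_mul c a]
    calc a * (starRingEnd ℂ) a + c * a * ((starRingEnd ℂ) c * (starRingEnd ℂ) a)
        = a * (starRingEnd ℂ) a + (c * (starRingEnd ℂ) c) * (a * (starRingEnd ℂ) a) := by ring
      _ = 1 := by rw [hc, haa]; norm_num
  set R : Matrix.unitaryGroup (Fin N) ℂ := ⟨rmat x y a b, rmat_mem hxy hmem⟩ with hR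
  have hnorm_a : ∀ w : ℂ, ‖a * w‖ ^ 2 = 2⁻¹ * ‖w‖ ^ 2 := by
    intro w
    rw [norm_mul, mul_pow, ha_def, Complex.norm_real, Real.norm_eq_abs,
      _root_.abs_of_nonneg (by positivity), sq, ha2]
  have key := integral_mul_left_eq_self
    (μ := μ)
    (f := fun U : Matrix.unitaryGroup (Fin N) ℂ =>
      ‖(U : Matrix (Fin N) (Fin N) ℂ) x z‖ ^ 2 * ‖(U : Matrix (Fin N) (Fin N) ℂ) x z‖ ^ 2 +
      ‖(U : Matrix (Fin N) (Fin N) ℂ) y z‖ ^ 2 * ‖(U : Matrix (Fin N) (Fin N) ℂ) y z‖ ^ 2) R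
  have hpt : ∀ U : Matrix.unitaryGroup (Fin N) ℂ,
      ‖((R * U : Matrix.unitaryGroup (Fin N) ℂ) : Matrix (Fin N) (Fin N) ℂ) x z‖ ^ 2 *
        ‖((R * U : Matrix.unitaryGroup (Fin N) ℂ) : Matrix (Fin N) (Fin N) ℂ) x z‖ ^ 2 +
      ‖((R * U : Matrix.unitaryGroup (Fin N) ℂ) : Matrix (Fin N) (Fin N) ℂ) y z‖ ^ 2 *
        ‖((R * U : Matrix.unitaryGroup (Fin N) ℂ) : Matrix (Fin N) (Fin N) ℂ) y z‖ ^ 2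
      = 4⁻¹ *
        (‖(U : Matrix (Fin N) (Fin N) ℂ) x z + c * (U : Matrix (Fin N) (Fin N) ℂ) y z‖ ^ 2 *
          ‖(U : Matrix (Fin N) (Fin N) ℂ) x z + c * (U : Matrix (Fin N) (Fin N) ℂ) y z‖ ^ 2 +
        ‖(U : Matrix (Fin N) (Fin N) ℂ) x z - c * (U : Matrix (Fin N) (Fin N) ℂ) y z‖ ^ 2 *
          ‖(U : Matrix (Fin N) (Fin N) ℂ) x z - c * (U : Matrix (Fin N) (Fin N) ℂ) y z‖ ^ 2) := by
    intro U
    set u := (U : Matrix (Fin N) (Fin N) ℂ) x z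
    set v := (U : Matrix (Fin N) (Fin N) ℂ) y z
    have hco : ((R * U : Matrix.unitaryGroup (Fin N) ℂ) : Matrix (Fin N) (Fin N) ℂ)
        = rmat x y a b * (U : Matrix (Fin N) (Fin N) ℂ) := rfl
    have h1 : ((R * U : Matrix.unitaryGroup (Fin N) ℂ) : Matrix (Fin N) (Fin N) ℂ) x z
        = a * (u + c * v) := by
      rw [hco, rmat_mul_x hxy]
      rw [hb_def]; ring
    have h2 : ((R * U : Matrix.unitaryGroup (Fin N) ℂ) : Matrix (Fin N) (Fin N) ℂ) y z
        = a * (v - (starRingEnd ℂ) c * u) := by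
      rw [hco, rmat_mul_y hxy]
      rw [show (starRingEnd ℂ) (c * a) = (starRingEnd ℂ) c * (starRingEnd ℂ) a from
        (starRingEnd ℂ).map_mul c a]
      simp only [ha_def, Complex.conj_ofReal]
      ring
    have h3 : ‖v - (starRingEnd ℂ) c * u‖ = ‖u - c * v‖ := by
      have : c * (v - (starRingEnd ℂ) c * u) = -(u - c * v) := by
        have : c * ((starRingEnd ℂ) c * u) = u := by rw [← mul_assoc, hc, one_mul]
        rw [mul_sub, this]; ring
      calc ‖v - (starRingEnd ℂ) c * u‖ = ‖c‖ * ‖v - (starRingEnd ℂ) c * u‖ := by rw [hcn, one_mul]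
        _ = ‖c * (v - (starRingEnd ℂ) c * u)‖ := (norm_mul _ _).symm
        _ = ‖-(u - c * v)‖ := by rw [this]
        _ = ‖u - c * v‖ := norm_neg _
    rw [h1, h2, hnorm_a, hnorm_a, h3]
    ring
  calc ∫ U : Matrix.unitaryGroup (Fin N) ℂ,
        (‖(U : Matrix (Fin N) (Fin N) ℂ) x z + c * (U : Matrix (Fin N) (Fin N) ℂ) y z‖ ^ 2 *
          ‖(U : Matrix (Fin N) (Fin N) ℂ) x z + c * (U : Matrix (Fin N) (Fin N) ℂ) y z‖ ^ 2 +
        ‖(U : Matrix (Fin N) (Fin N) ℂ) x z - c * (U : Matrix (Fin N) (Fin N) ℂ) y z‖ ^ 2 *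
          ‖(U : Matrix (Fin N) (Fin N) ℂ) x z - c * (U : Matrix (Fin N) (Fin N) ℂ) y z‖ ^ 2) ∂μ
      = ∫ U : Matrix.unitaryGroup (Fin N) ℂ, 4 *
          (‖((R * U : Matrix.unitaryGroup (Fin N) ℂ) : Matrix (Fin N) (Fin N) ℂ) x z‖ ^ 2 *
            ‖((R * U : Matrix.unitaryGroup (Fin N) ℂ) : Matrix (Fin N) (Fin N) ℂ) x z‖ ^ 2 +
          ‖((R * U : Matrix.unitaryGroup (Fin N) ℂ) : Matrix (Fin N) (Fin N) ℂ) y z‖ ^ 2 *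
            ‖((R * U : Matrix.unitaryGroup (Fin N) ℂ) : Matrix (Fin N) (Fin N) ℂ) y z‖ ^ 2) ∂μ := by
        apply integral_congr_ae
        apply Filter.Eventually.of_forall
        intro U
        simp only [hpt]
        ring
    _ = 4 * ∫ U : Matrix.unitaryGroup (Fin N) ℂ,
          (‖((R * U : Matrix.unitaryGroup (Fin N) ℂ) : Matrix (Fin N) (Fin N) ℂ) x z‖ ^ 2 *
            ‖((R * U : Matrix.unitaryGroup (Fin N) ℂ) : Matrix (Fin N) (Fin N) ℂ) x z‖ ^ 2 +
          ‖((R * U : Matrix.unitaryGroup (Fin N) ℂ) : Matrix (Fin N) (Fin N) ℂ) y z‖ ^ 2 *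
            ‖((R * U : Matrix.unitaryGroup (Fin N) ℂ) : Matrix (Fin N) (Fin N) ℂ) y z‖ ^ 2) ∂μ :=
        MeasureTheory.integral_const_mul 4 _
    _ = 4 * ∫ U : Matrix.unitaryGroup (Fin N) ℂ,
          (‖(U : Matrix (Fin N) (Fin N) ℂ) x z‖ ^ 2 * ‖(U : Matrix (Fin N) (Fin N) ℂ) x z‖ ^ 2 +
          ‖(U : Matrix (Fin N) (Fin N) ℂ) y z‖ ^ 2 * ‖(U : Matrix (Fin N) (Fin N) ℂ) y z‖ ^ 2) ∂μ := by
        rw [key]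
    _ = 4 * (mom μ z x x + mom μ z y y) := by
        rw [integral_add (integrable_mom μ z x x) (integrable_mom μ z y y)]
        rfl

private lemma mom_half (z x y : Fin N) (hxy : x ≠ y) : mom μ z x x = 2 * mom μ z x y := by
  have h1 := rot_int μ z x y hxy 1 (by simp)
  have h2 := rot_int μ z x y hxy Complex.I (by simp [Complex.conj_I, Complex.I_mul_I])
  simp only [one_mul] at h1
  have hyy : mom μ z y y = mom μ z x x := by
    have := mom_perm μ z x x (Equiv.swap x y)
    rw [Equiv.swap_apply_left] at this
    exact this
  -- integrability of the two pair-functions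
  have hbnd : ∀ (c : ℂ), ‖c‖ = 1 → ∀ U : Matrix.unitaryGroup (Fin N) ℂ, ∀ s : ℂ, (s = 1 ∨ s = -1) →
      ‖(U : Matrix (Fin N) (Fin N) ℂ) x z + s * (c * (U : Matrix (Fin N) (Fin N) ℂ) y z)‖ ^ 2 ≤ 4 := by
    intro c hc U s hs
    have h1 : ‖(U : Matrix (Fin N) (Fin N) ℂ) x z + s * (c * (U : Matrix (Fin N) (Fin N) ℂ) y z)‖
        ≤ 2 := by
      calc ‖(U : Matrix (Fin N) (Fin N) ℂ) x z + s * (c * (U : Matrix (Fin N) (Fin N) ℂ) y z)‖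
          ≤ ‖(U : Matrix (Fin N) (Fin N) ℂ) x z‖ + ‖s * (c * (U : Matrix (Fin N) (Fin N) ℂ) y z)‖ :=
            norm_add_le _ _
        _ ≤ 1 + 1 := by
            apply add_le_add (entry_le U x z)
            have hs1 : ‖s‖ = 1 := by rcases hs with h | h <;> rw [h] <;> simp
            rw [norm_mul, norm_mul, hc, one_mul, hs1, one_mul]
            exact entry_le U y z
        _ = 2 := by norm_num
    nlinarith [norm_nonneg ((U : Matrix (Fin N) (Fin N) ℂ) x z +
      s * (c * (U : Matrix (Fin N) (Fin N) ℂ) y z))]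
  have hintc : ∀ (c : ℂ), ‖c‖ = 1 → Integrable (fun U : Matrix.unitaryGroup (Fin N) ℂ =>
      ‖(U : Matrix (Fin N) (Fin N) ℂ) x z + c * (U : Matrix (Fin N) (Fin N) ℂ) y z‖ ^ 2 *
        ‖(U : Matrix (Fin N) (Fin N) ℂ) x z + c * (U : Matrix (Fin N) (Fin N) ℂ) y z‖ ^ 2 +
      ‖(U : Matrix (Fin N) (Fin N) ℂ) x z - c * (U : Matrix (Fin N) (Fin N) ℂ) y z‖ ^ 2 *
        ‖(U : Matrix (Fin N) (Fin N) ℂ) x z - c * (U : Matrix (Fin N) (Fin N) ℂ) y z‖ ^ 2) μ := by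
    intro c hc
    apply integrable_of_bdd μ ?_ 32
    · intro U
      have hp := hbnd c hc U 1 (Or.inl rfl)
      have hm := hbnd c hc U (-1) (Or.inr rfl)
      rw [one_mul] at hp
      have hm' : ‖(U : Matrix (Fin N) (Fin N) ℂ) x z - c * (U : Matrix (Fin N) (Fin N) ℂ) y z‖ ^ 2
          ≤ 4 := by
        have : (U : Matrix (Fin N) (Fin N) ℂ) x z + (-1) * (c * (U : Matrix (Fin N) (Fin N) ℂ) y z)
            = (U : Matrix (Fin N) (Fin N) ℂ) x z - c * (U : Matrix (Fin N) (Fin N) ℂ) y z := by ring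
        rw [this] at hm
        exact hm
      rw [_root_.abs_of_nonneg (by positivity)]
      nlinarith [sq_nonneg ‖(U : Matrix (Fin N) (Fin N) ℂ) x z +
          c * (U : Matrix (Fin N) (Fin N) ℂ) y z‖,
        sq_nonneg ‖(U : Matrix (Fin N) (Fin N) ℂ) x z - c * (U : Matrix (Fin N) (Fin N) ℂ) y z‖]
    · have c1 := cont_entry (N := N) x z
      have c2 := cont_entry (N := N) y z
      have cplus : Continuous fun U : Matrix.unitaryGroup (Fin N) ℂ =>
          ‖(U : Matrix (Fin N) (Fin N) ℂ) x z + c * (U : Matrix (Fin N) (Fin N) ℂ) y z‖ ^ 2 :=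
        ((c1.add (continuous_const.mul c2)).norm.pow 2)
      have cminus : Continuous fun U : Matrix.unitaryGroup (Fin N) ℂ =>
          ‖(U : Matrix (Fin N) (Fin N) ℂ) x z - c * (U : Matrix (Fin N) (Fin N) ℂ) y z‖ ^ 2 :=
        ((c1.sub (continuous_const.mul c2)).norm.pow 2)
      exact (cplus.mul cplus).add (cminus.mul cminus)
  have hint1 := hintc 1 (by simp)
  simp only [one_mul] at hint1
  have hint2 := hintc Complex.I (by simp)
  have hadd : ∫ U : Matrix.unitaryGroup (Fin N) ℂ,
      ((‖(U : Matrix (Fin N) (Fin N) ℂ) x z + (U : Matrix (Fin N) (Fin N) ℂ) y z‖ ^ 2 *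
        ‖(U : Matrix (Fin N) (Fin N) ℂ) x z + (U : Matrix (Fin N) (Fin N) ℂ) y z‖ ^ 2 +
      ‖(U : Matrix (Fin N) (Fin N) ℂ) x z - (U : Matrix (Fin N) (Fin N) ℂ) y z‖ ^ 2 *
        ‖(U : Matrix (Fin N) (Fin N) ℂ) x z - (U : Matrix (Fin N) (Fin N) ℂ) y z‖ ^ 2) +
      (‖(U : Matrix (Fin N) (Fin N) ℂ) x z + Complex.I * (U : Matrix (Fin N) (Fin N) ℂ) y z‖ ^ 2 *
        ‖(U : Matrix (Fin N) (Fin N) ℂ) x z + Complex.I * (U : Matrix (Fin N) (Fin N) ℂ) y z‖ ^ 2 +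
      ‖(U : Matrix (Fin N) (Fin N) ℂ) x z - Complex.I * (U : Matrix (Fin N) (Fin N) ℂ) y z‖ ^ 2 *
        ‖(U : Matrix (Fin N) (Fin N) ℂ) x z - Complex.I * (U : Matrix (Fin N) (Fin N) ℂ) y z‖ ^ 2)) ∂μ
      = 8 * (mom μ z x x + mom μ z y y) := by
    rw [integral_add hint1 hint2, h1, h2]
    ring
  have hpt : ∀ U : Matrix.unitaryGroup (Fin N) ℂ,
      ((‖(U : Matrix (Fin N) (Fin N) ℂ) x z + (U : Matrix (Fin N) (Fin N) ℂ) y z‖ ^ 2 *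
        ‖(U : Matrix (Fin N) (Fin N) ℂ) x z + (U : Matrix (Fin N) (Fin N) ℂ) y z‖ ^ 2 +
      ‖(U : Matrix (Fin N) (Fin N) ℂ) x z - (U : Matrix (Fin N) (Fin N) ℂ) y z‖ ^ 2 *
        ‖(U : Matrix (Fin N) (Fin N) ℂ) x z - (U : Matrix (Fin N) (Fin N) ℂ) y z‖ ^ 2) +
      (‖(U : Matrix (Fin N) (Fin N) ℂ) x z + Complex.I * (U : Matrix (Fin N) (Fin N) ℂ) y z‖ ^ 2 *
        ‖(U : Matrix (Fin N) (Fin N) ℂ) x z + Complex.I * (U : Matrix (Fin N) (Fin N) ℂ) y z‖ ^ 2 +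
      ‖(U : Matrix (Fin N) (Fin N) ℂ) x z - Complex.I * (U : Matrix (Fin N) (Fin N) ℂ) y z‖ ^ 2 *
        ‖(U : Matrix (Fin N) (Fin N) ℂ) x z - Complex.I * (U : Matrix (Fin N) (Fin N) ℂ) y z‖ ^ 2))
      = 4 * (‖(U : Matrix (Fin N) (Fin N) ℂ) x z‖ ^ 2 * ‖(U : Matrix (Fin N) (Fin N) ℂ) x z‖ ^ 2) +
        4 * (‖(U : Matrix (Fin N) (Fin N) ℂ) y z‖ ^ 2 * ‖(U : Matrix (Fin N) (Fin N) ℂ) y z‖ ^ 2) +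
        16 * (‖(U : Matrix (Fin N) (Fin N) ℂ) x z‖ ^ 2 * ‖(U : Matrix (Fin N) (Fin N) ℂ) y z‖ ^ 2) := by
    intro U
    have := four_norm ((U : Matrix (Fin N) (Fin N) ℂ) x z) ((U : Matrix (Fin N) (Fin N) ℂ) y z)
    linarith
  have hrhs : ∫ U : Matrix.unitaryGroup (Fin N) ℂ,
      (4 * (‖(U : Matrix (Fin N) (Fin N) ℂ) x z‖ ^ 2 * ‖(U : Matrix (Fin N) (Fin N) ℂ) x z‖ ^ 2) +
        4 * (‖(U : Matrix (Fin N) (Fin N) ℂ) y z‖ ^ 2 * ‖(U : Matrix (Fin N) (Fin N) ℂ) y z‖ ^ 2) +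
        16 * (‖(U : Matrix (Fin N) (Fin N) ℂ) x z‖ ^ 2 * ‖(U : Matrix (Fin N) (Fin N) ℂ) y z‖ ^ 2)) ∂μ
      = 4 * mom μ z x x + 4 * mom μ z y y + 16 * mom μ z x y := by
    have hI1 : Integrable (fun U : Matrix.unitaryGroup (Fin N) ℂ =>
        4 * (‖(U : Matrix (Fin N) (Fin N) ℂ) x z‖ ^ 2 * ‖(U : Matrix (Fin N) (Fin N) ℂ) x z‖ ^ 2) +
        4 * (‖(U : Matrix (Fin N) (Fin N) ℂ) y z‖ ^ 2 * ‖(U : Matrix (Fin N) (Fin N) ℂ) y z‖ ^ 2)) μ :=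
      ((integrable_mom μ z x x).const_mul 4).add ((integrable_mom μ z y y).const_mul 4)
    rw [integral_add hI1 ((integrable_mom μ z x y).const_mul 16),
      integral_add ((integrable_mom μ z x x).const_mul 4) ((integrable_mom μ z y y).const_mul 4),
      MeasureTheory.integral_const_mul, MeasureTheory.integral_const_mul,
      MeasureTheory.integral_const_mul]
    rfl
  have hfin : (8 : ℝ) * (mom μ z x x + mom μ z y y)
      = 4 * mom μ z x x + 4 * mom μ z y y + 16 * mom μ z x y := by
    rw [← hadd, ← hrhs]
    exact integral_congr_ae (Filter.Eventually.of_forall fun U => hpt U)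
  rw [hyy] at hfin
  linarith

private lemma mom_total (z : Fin N) : ∑ α, ∑ β, mom μ z α β = 1 := by
  have h1 : ∀ α : Fin N, ∑ β, mom μ z α β = ∫ U : Matrix.unitaryGroup (Fin N) ℂ,
      (∑ β, ‖(U : Matrix (Fin N) (Fin N) ℂ) α z‖ ^ 2 * ‖(U : Matrix (Fin N) (Fin N) ℂ) β z‖ ^ 2) ∂μ := by
    intro α
    exact (integral_finset_sum Finset.univ fun β _ => integrable_mom μ z α β).symm
  rw [Finset.sum_congr rfl fun α _ => h1 α]
  rw [← integral_finset_sum Finset.univ fun α _ =>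
    integrable_finset_sum Finset.univ fun β _ => integrable_mom μ z α β]
  have h2 : ∀ U : Matrix.unitaryGroup (Fin N) ℂ,
      (∑ α, ∑ β, ‖(U : Matrix (Fin N) (Fin N) ℂ) α z‖ ^ 2 * ‖(U : Matrix (Fin N) (Fin N) ℂ) β z‖ ^ 2)
      = 1 := by
    intro U
    rw [← Finset.sum_mul_sum]
    rw [col_sum U z, one_mul]
  rw [integral_congr_ae (Filter.Eventually.of_forall fun U => h2 U)]
  simp

private lemma mom_s (hN : 0 < N) (z : Fin N) :
    ((N : ℝ) + 1) * (∑ α, mom μ z α α) = 2 := by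
  rcases lt_or_ge N 2 with h2 | h2
  · have hN1 : N = 1 := by omega
    subst hN1
    have htot := mom_total μ z
    simp only [Fin.sum_univ_one] at htot ⊢
    rw [htot]
    norm_num
  · set x : Fin N := ⟨0, by omega⟩ with hx
    set y : Fin N := ⟨1, by omega⟩ with hy
    have hxy : x ≠ y := by simp [hx, hy, Fin.ext_iff]
    have hdiag : ∀ α, mom μ z α α = mom μ z x x := by
      intro α
      have := mom_perm μ z α α (Equiv.swap α x)
      rw [Equiv.swap_apply_left] at this
      exact this.symm
    have hoff : ∀ α β, α ≠ β → mom μ z α β = mom μ z x y := by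
      intro α β hαβ
      set τ : Equiv.Perm (Fin N) := Equiv.swap α x with hτ
      set ρ : Equiv.Perm (Fin N) := Equiv.swap (τ β) y with hρ
      have hτβ : τ β ≠ x := by
        rw [show x = τ α from (Equiv.swap_apply_left α x).symm]
        exact fun hq => hαβ.symm (τ.injective hq)
      have h1 : ρ (τ α) = x := by
        rw [Equiv.swap_apply_left]
        exact Equiv.swap_apply_of_ne_of_ne (Ne.symm hτβ) hxy
      have h2 : ρ (τ β) = y := Equiv.swap_apply_left _ _
      have := mom_perm μ z α β (τ.trans ρ)
      rw [show (τ.trans ρ) α = ρ (τ α) from rfl, show (τ.trans ρ) β = ρ (τ β) from rfl,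
        h1, h2] at this
      exact this.symm
    have hhalf := mom_half μ z x y hxy
    have htot := mom_total μ z
    have hrow : ∀ α : Fin N, ∑ β, mom μ z α β
        = mom μ z x x + ((N : ℝ) - 1) * mom μ z x y := by
      intro α
      have hcongr : ∀ β : Fin N, mom μ z α β
          = (if β = α then mom μ z x x else mom μ z x y) := by
        intro β
        by_cases hβ : β = α
        · rw [if_pos hβ, hβ, hdiag α]
        · rw [if_neg hβ, hoff α β (fun hq => hβ hq.symm)]
      rw [Finset.sum_congr rfl fun β _ => hcongr β]
      have : ∀ β : Fin N, (if β = α then mom μ z x x else mom μ z x y)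
          = mom μ z x y + (if β = α then mom μ z x x - mom μ z x y else 0) := by
        intro β
        by_cases hβ : β = α <;> simp [hβ]
      rw [Finset.sum_congr rfl fun β _ => this β, Finset.sum_add_distrib,
        Finset.sum_ite_eq' Finset.univ α fun _ => mom μ z x x - mom μ z x y]
      simp [Finset.card_univ]
      ring
    rw [Finset.sum_congr rfl fun α _ => hrow α, Finset.sum_const, Finset.card_univ] at htot
    simp only [Fintype.card_fin, nsmul_eq_mul] at htot
    have hsum : ∑ α, mom μ z α α = (N : ℝ) * mom μ z x x := by
      rw [Finset.sum_congr rfl fun α _ => hdiag α, Finset.sum_const, Finset.card_univ]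
      simp [Fintype.card_fin]
    rw [hsum]
    linear_combination 2 * htot + (N : ℝ) * ((N : ℝ) - 1) * hhalf

end UG

private lemma coord_int (c : ℤ) :
    ∫ t in Set.Icc (0:ℝ) (2*Real.pi), Complex.exp (Complex.I * c * t)
      = if c = 0 then ((2*Real.pi : ℝ) : ℂ) else 0 := by
  rw [MeasureTheory.integral_Icc_eq_integral_Ioc,
    ← intervalIntegral.integral_of_le (by positivity : (0:ℝ) ≤ 2*Real.pi)]
  by_cases hc : c = 0
  · rw [if_pos hc, hc]
    simp only [Int.cast_zero, mul_zero, zero_mul, Complex.exp_zero]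
    rw [intervalIntegral.integral_const]
    simp
  · rw [if_neg hc]
    have hne : Complex.I * c ≠ 0 := by
      simp [Complex.I_ne_zero, Complex.ext_iff, hc]
    have heq : ∀ t : ℝ, Complex.exp (Complex.I * c * t) = Complex.exp ((Complex.I * c) * t) := by
      intro t; ring_nf
    rw [integral_exp_mul_complex hne]
    have h2 : Complex.I * c * (2*Real.pi : ℝ) = (c : ℂ) * (2 * Real.pi * Complex.I) := by
      push_cast; ring
    rw [h2, Complex.exp_int_mul_two_pi_mul_I]
    simp

private lemma cube_exp {N : ℕ} (c : Fin N × Fin N → ℤ) :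
    (∫ φ in Set.univ.pi fun _ : Fin N × Fin N => Set.Icc (0:ℝ) (2*Real.pi),
      ∏ p, Complex.exp (Complex.I * c p * φ p))
    = if (∀ p, c p = 0) then (((2*Real.pi)^(N^2) : ℝ) : ℂ) else 0 := by
  rw [← MeasureTheory.integral_indicator (MeasurableSet.univ_pi fun _ => measurableSet_Icc)]
  have hind : ∀ φ : Fin N × Fin N → ℝ,
      (Set.univ.pi fun _ : Fin N × Fin N => Set.Icc (0:ℝ) (2*Real.pi)).indicator
        (fun ψ => ∏ p, Complex.exp (Complex.I * c p * ψ p)) φ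
      = ∏ p, (Set.Icc (0:ℝ) (2*Real.pi)).indicator
          (fun t => Complex.exp (Complex.I * c p * t)) (φ p) := by
    intro φ
    by_cases hφ : φ ∈ Set.univ.pi fun _ : Fin N × Fin N => Set.Icc (0:ℝ) (2*Real.pi)
    · rw [Set.indicator_of_mem hφ]
      refine Finset.prod_congr rfl fun p _ => ?_
      have hm : φ p ∈ Set.Icc (0:ℝ) (2*Real.pi) := hφ p (Set.mem_univ p)
      rw [Set.indicator_of_mem hm]
    · rw [Set.indicator_of_notMem hφ]
      rw [Set.mem_univ_pi] at hφ
      push_neg at hφ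
      obtain ⟨p, hp⟩ := hφ
      exact (Finset.prod_eq_zero (Finset.mem_univ p) (Set.indicator_of_notMem hp _)).symm
  rw [integral_congr_ae (Filter.Eventually.of_forall hind)]
  rw [MeasureTheory.volume_pi]
  rw [MeasureTheory.integral_fintype_prod_eq_prod
    (f := fun p t => (Set.Icc (0:ℝ) (2*Real.pi)).indicator
      (fun s => Complex.exp (Complex.I * c p * s)) t)]
  rw [Finset.prod_congr rfl fun p _ => by
    rw [MeasureTheory.integral_indicator measurableSet_Icc, coord_int]]
  by_cases hall : ∀ p, c p = 0
  · rw [if_pos hall, Finset.prod_congr rfl fun p (_ : p ∈ Finset.univ) => if_pos (hall p),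
      Finset.prod_const, Finset.card_univ]
    simp only [Fintype.card_prod, Fintype.card_fin]
    rw [Complex.ofReal_pow]
    ring
  · rw [if_neg hall]
    push_neg at hall
    obtain ⟨p, hp⟩ := hall
    exact Finset.prod_eq_zero (Finset.mem_univ p) (if_neg hp)

private def coefE {N : ℕ} (α₁ α₂ l l' : Fin N) : Fin N × Fin N → ℤ := fun p =>
  (if p = (α₁, l) then 1 else 0) - (if p = (α₂, l) then 1 else 0)
  + (if p = (α₂, l') then 1 else 0) - (if p = (α₁, l') then 1 else 0)

private lemma coef_zero_iff {N : ℕ} (α₁ α₂ l l' : Fin N) :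
    (∀ p, coefE α₁ α₂ l l' p = 0) ↔ (α₁ = α₂ ∨ l = l') := by
  constructor
  · intro h
    by_contra hcon
    push_neg at hcon
    obtain ⟨h1, h2⟩ := hcon
    have := h (α₁, l)
    simp [coefE, Prod.ext_iff, h1, h2] at this
  · intro h p
    rcases h with h | h
    · subst h; simp only [coefE]; ring
    · subst h; simp only [coefE]; ring

private lemma exp_eq {N : ℕ} (α₁ α₂ l l' : Fin N) (φ : Fin N × Fin N → ℝ) :
    Complex.exp (Complex.I * ((φ (α₁, l) : ℂ) - (φ (α₂, l) : ℂ))) *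
      Complex.exp (Complex.I * ((φ (α₂, l') : ℂ) - (φ (α₁, l') : ℂ)))
    = ∏ p, Complex.exp (Complex.I * (coefE α₁ α₂ l l' p : ℂ) * (φ p : ℂ)) := by
  rw [← Complex.exp_sum, ← Complex.exp_add]
  congr 1
  have hterm : ∀ p₀ : Fin N × Fin N,
      (∑ p, (if p = p₀ then (1:ℂ) else 0) * (φ p : ℂ)) = (φ p₀ : ℂ) := by
    intro p₀
    simp [ite_mul, Finset.sum_ite_eq']
  have expand : (∑ p, Complex.I * (coefE α₁ α₂ l l' p : ℂ) * (φ p : ℂ))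
      = Complex.I * ((∑ p, (if p = (α₁, l) then (1:ℂ) else 0) * (φ p : ℂ))
        - (∑ p, (if p = (α₂, l) then (1:ℂ) else 0) * (φ p : ℂ))
        + (∑ p, (if p = (α₂, l') then (1:ℂ) else 0) * (φ p : ℂ))
        - (∑ p, (if p = (α₁, l') then (1:ℂ) else 0) * (φ p : ℂ))) := by
    rw [← Finset.sum_sub_distrib, ← Finset.sum_add_distrib, ← Finset.sum_sub_distrib,
      Finset.mul_sum]
    apply Finset.sum_congr rfl
    intro p _
    simp only [coefE, Int.cast_sub, Int.cast_add, apply_ite (fun n : ℤ => (n : ℂ)),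
      Int.cast_one, Int.cast_zero]
    ring
  rw [expand, hterm, hterm, hterm, hterm]
  ring


private lemma conj_self (w : ℂ) : w * (starRingEnd ℂ) w = ((‖w‖ ^ 2 : ℝ) : ℂ) := by
  rw [Complex.mul_conj]
  norm_cast
  rw [Complex.normSq_eq_norm_sq]

private lemma trace_rdm {N : ℕ} (φ : Fin N × Fin N → ℝ) (ψ₁ ψ₂ : Fin N → ℂ) :
    Matrix.trace (rdm N φ ψ₁ ψ₂ * rdm N φ ψ₁ ψ₂)
    = ∑ a : (Fin N × Fin N) × Fin N × Fin N,
        (∏ p, Complex.exp (Complex.I * (coefE a.1.1 a.1.2 a.2.1 a.2.2 p : ℂ) * (φ p : ℂ))) *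
        ((‖ψ₁ a.1.1‖ ^ 2 * ‖ψ₁ a.1.2‖ ^ 2 : ℝ) : ℂ) *
        ((‖ψ₂ a.2.1‖ ^ 2 * ‖ψ₂ a.2.2‖ ^ 2 : ℝ) : ℂ) := by
  rw [Fintype.sum_prod_type]
  simp only [Fintype.sum_prod_type]
  rw [Matrix.trace]
  simp only [Matrix.diag_apply, Matrix.mul_apply, rdm, Matrix.of_apply]
  apply Finset.sum_congr rfl
  intro α₁ _
  rw [Finset.sum_congr rfl fun α₂ (_ : α₂ ∈ Finset.univ) => Finset.sum_mul_sum
    (Finset.univ : Finset (Fin N)) (Finset.univ : Finset (Fin N)) _ _]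
  apply Finset.sum_congr rfl
  intro α₂ _
  apply Finset.sum_congr rfl
  intro l _
  apply Finset.sum_congr rfl
  intro l' _
  rw [← exp_eq]
  have h1 : Complex.exp (Complex.I * ((φ (α₁, l) : ℂ) - (φ (α₂, l) : ℂ))) *
        ψ₁ α₁ * (starRingEnd ℂ) (ψ₁ α₂) * (‖ψ₂ l‖ : ℂ) ^ 2 *
      (Complex.exp (Complex.I * ((φ (α₂, l') : ℂ) - (φ (α₁, l') : ℂ))) *
        ψ₁ α₂ * (starRingEnd ℂ) (ψ₁ α₁) * (‖ψ₂ l'‖ : ℂ) ^ 2)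
      = (Complex.exp (Complex.I * ((φ (α₁, l) : ℂ) - (φ (α₂, l) : ℂ))) *
          Complex.exp (Complex.I * ((φ (α₂, l') : ℂ) - (φ (α₁, l') : ℂ)))) *
        ((ψ₁ α₁ * (starRingEnd ℂ) (ψ₁ α₁)) * (ψ₁ α₂ * (starRingEnd ℂ) (ψ₁ α₂))) *
        (((‖ψ₂ l‖ : ℂ) ^ 2) * ((‖ψ₂ l'‖ : ℂ) ^ 2)) := by ring
  rw [h1, conj_self, conj_self]
  push_cast
  ring

section UG2
variable {N : ℕ} [MeasurableSpace (Matrix.unitaryGroup (Fin N) ℂ)]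
  [BorelSpace (Matrix.unitaryGroup (Fin N) ℂ)]
  (μ : Measure (Matrix.unitaryGroup (Fin N) ℂ))
  [IsProbabilityMeasure μ] [μ.IsMulLeftInvariant]

private lemma inner2 (z : Fin N) (φ : Fin N × Fin N → ℝ) (ψ₁ : Fin N → ℂ) :
    ∫ U₂ : Matrix.unitaryGroup (Fin N) ℂ,
      (1 - Matrix.trace
        (rdm N φ ψ₁ (fun l => (U₂ : Matrix (Fin N) (Fin N) ℂ) l z) *
         rdm N φ ψ₁ (fun l => (U₂ : Matrix (Fin N) (Fin N) ℂ) l z))) ∂μ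
    = 1 - ∑ a : (Fin N × Fin N) × Fin N × Fin N,
        (∏ p, Complex.exp (Complex.I * (coefE a.1.1 a.1.2 a.2.1 a.2.2 p : ℂ) * (φ p : ℂ))) *
        ((‖ψ₁ a.1.1‖ ^ 2 * ‖ψ₁ a.1.2‖ ^ 2 : ℝ) : ℂ) * ((mom μ z a.2.1 a.2.2 : ℝ) : ℂ) := by
  have hpt : ∀ U₂ : Matrix.unitaryGroup (Fin N) ℂ,
      (1 - Matrix.trace
        (rdm N φ ψ₁ (fun l => (U₂ : Matrix (Fin N) (Fin N) ℂ) l z) *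
         rdm N φ ψ₁ (fun l => (U₂ : Matrix (Fin N) (Fin N) ℂ) l z)))
      = 1 - ∑ a : (Fin N × Fin N) × Fin N × Fin N,
          ((∏ p, Complex.exp (Complex.I * (coefE a.1.1 a.1.2 a.2.1 a.2.2 p : ℂ) * (φ p : ℂ))) *
            ((‖ψ₁ a.1.1‖ ^ 2 * ‖ψ₁ a.1.2‖ ^ 2 : ℝ) : ℂ)) *
          ((‖(U₂ : Matrix (Fin N) (Fin N) ℂ) a.2.1 z‖ ^ 2 *
            ‖(U₂ : Matrix (Fin N) (Fin N) ℂ) a.2.2 z‖ ^ 2 : ℝ) : ℂ) := by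
    intro U₂
    rw [trace_rdm]
  rw [integral_congr_ae (Filter.Eventually.of_forall hpt)]
  have hInt : ∀ a : (Fin N × Fin N) × Fin N × Fin N,
      Integrable (fun U₂ : Matrix.unitaryGroup (Fin N) ℂ =>
        ((∏ p, Complex.exp (Complex.I * (coefE a.1.1 a.1.2 a.2.1 a.2.2 p : ℂ) * (φ p : ℂ))) *
          ((‖ψ₁ a.1.1‖ ^ 2 * ‖ψ₁ a.1.2‖ ^ 2 : ℝ) : ℂ)) *
        ((‖(U₂ : Matrix (Fin N) (Fin N) ℂ) a.2.1 z‖ ^ 2 *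
          ‖(U₂ : Matrix (Fin N) (Fin N) ℂ) a.2.2 z‖ ^ 2 : ℝ) : ℂ)) μ := by
    intro a
    exact ((integrable_mom μ z a.2.1 a.2.2).ofReal (𝕜 := ℂ)).const_mul _
  rw [integral_sub (integrable_const 1) (integrable_finset_sum Finset.univ fun a _ => hInt a)]
  rw [integral_finset_sum Finset.univ fun a _ => hInt a]
  congr 1
  · simp
  · apply Finset.sum_congr rfl
    intro a _
    have hO : (∫ U₂ : Matrix.unitaryGroup (Fin N) ℂ,
        ((‖(U₂ : Matrix (Fin N) (Fin N) ℂ) a.2.1 z‖ ^ 2 *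
          ‖(U₂ : Matrix (Fin N) (Fin N) ℂ) a.2.2 z‖ ^ 2 : ℝ) : ℂ) ∂μ)
        = ((mom μ z a.2.1 a.2.2 : ℝ) : ℂ) := integral_ofReal
    rw [MeasureTheory.integral_const_mul, hO]

private lemma inner1 (z : Fin N) (φ : Fin N × Fin N → ℝ) :
    ∫ U₁ : Matrix.unitaryGroup (Fin N) ℂ,
      (1 - ∑ a : (Fin N × Fin N) × Fin N × Fin N,
        (∏ p, Complex.exp (Complex.I * (coefE a.1.1 a.1.2 a.2.1 a.2.2 p : ℂ) * (φ p : ℂ))) *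
        ((‖(U₁ : Matrix (Fin N) (Fin N) ℂ) a.1.1 z‖ ^ 2 *
          ‖(U₁ : Matrix (Fin N) (Fin N) ℂ) a.1.2 z‖ ^ 2 : ℝ) : ℂ) *
        ((mom μ z a.2.1 a.2.2 : ℝ) : ℂ)) ∂μ
    = 1 - ∑ a : (Fin N × Fin N) × Fin N × Fin N,
        (∏ p, Complex.exp (Complex.I * (coefE a.1.1 a.1.2 a.2.1 a.2.2 p : ℂ) * (φ p : ℂ))) *
        ((mom μ z a.1.1 a.1.2 : ℝ) : ℂ) * ((mom μ z a.2.1 a.2.2 : ℝ) : ℂ) := by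
  have hpt : ∀ U₁ : Matrix.unitaryGroup (Fin N) ℂ,
      (1 - ∑ a : (Fin N × Fin N) × Fin N × Fin N,
        (∏ p, Complex.exp (Complex.I * (coefE a.1.1 a.1.2 a.2.1 a.2.2 p : ℂ) * (φ p : ℂ))) *
        ((‖(U₁ : Matrix (Fin N) (Fin N) ℂ) a.1.1 z‖ ^ 2 *
          ‖(U₁ : Matrix (Fin N) (Fin N) ℂ) a.1.2 z‖ ^ 2 : ℝ) : ℂ) *
        ((mom μ z a.2.1 a.2.2 : ℝ) : ℂ))
      = 1 - ∑ a : (Fin N × Fin N) × Fin N × Fin N,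
        ((∏ p, Complex.exp (Complex.I * (coefE a.1.1 a.1.2 a.2.1 a.2.2 p : ℂ) * (φ p : ℂ))) *
          ((mom μ z a.2.1 a.2.2 : ℝ) : ℂ)) *
        ((‖(U₁ : Matrix (Fin N) (Fin N) ℂ) a.1.1 z‖ ^ 2 *
          ‖(U₁ : Matrix (Fin N) (Fin N) ℂ) a.1.2 z‖ ^ 2 : ℝ) : ℂ) := by
    intro U₁
    congr 1
    exact Finset.sum_congr rfl fun a _ => by ring
  rw [integral_congr_ae (Filter.Eventually.of_forall hpt)]
  have hInt : ∀ a : (Fin N × Fin N) × Fin N × Fin N,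
      Integrable (fun U₁ : Matrix.unitaryGroup (Fin N) ℂ =>
        ((∏ p, Complex.exp (Complex.I * (coefE a.1.1 a.1.2 a.2.1 a.2.2 p : ℂ) * (φ p : ℂ))) *
          ((mom μ z a.2.1 a.2.2 : ℝ) : ℂ)) *
        ((‖(U₁ : Matrix (Fin N) (Fin N) ℂ) a.1.1 z‖ ^ 2 *
          ‖(U₁ : Matrix (Fin N) (Fin N) ℂ) a.1.2 z‖ ^ 2 : ℝ) : ℂ)) μ := by
    intro a
    exact ((integrable_mom μ z a.1.1 a.1.2).ofReal (𝕜 := ℂ)).const_mul _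
  rw [integral_sub (integrable_const 1) (integrable_finset_sum Finset.univ fun a _ => hInt a)]
  rw [integral_finset_sum Finset.univ fun a _ => hInt a]
  congr 1
  · simp
  · apply Finset.sum_congr rfl
    intro a _
    have hO : (∫ U₁ : Matrix.unitaryGroup (Fin N) ℂ,
        ((‖(U₁ : Matrix (Fin N) (Fin N) ℂ) a.1.1 z‖ ^ 2 *
          ‖(U₁ : Matrix (Fin N) (Fin N) ℂ) a.1.2 z‖ ^ 2 : ℝ) : ℂ) ∂μ)
        = ((mom μ z a.1.1 a.1.2 : ℝ) : ℂ) := integral_ofReal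
    rw [MeasureTheory.integral_const_mul, hO]
    ring

private lemma T_real (z : Fin N) :
    (∑ a : (Fin N × Fin N) × Fin N × Fin N,
      if (a.1.1 = a.1.2 ∨ a.2.1 = a.2.2) then mom μ z a.1.1 a.1.2 * mom μ z a.2.1 a.2.2 else 0)
    = 2 * (∑ α, mom μ z α α) - (∑ α, mom μ z α α) ^ 2 := by
  have hsplit : ∀ a : (Fin N × Fin N) × Fin N × Fin N,
      (if (a.1.1 = a.1.2 ∨ a.2.1 = a.2.2) then mom μ z a.1.1 a.1.2 * mom μ z a.2.1 a.2.2 else 0)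
      = (if a.1.1 = a.1.2 then mom μ z a.1.1 a.1.2 else 0) * mom μ z a.2.1 a.2.2
        + mom μ z a.1.1 a.1.2 * (if a.2.1 = a.2.2 then mom μ z a.2.1 a.2.2 else 0)
        - (if a.1.1 = a.1.2 then mom μ z a.1.1 a.1.2 else 0) *
          (if a.2.1 = a.2.2 then mom μ z a.2.1 a.2.2 else 0) := by
    intro a
    by_cases h1 : a.1.1 = a.1.2 <;> by_cases h2 : a.2.1 = a.2.2 <;> simp [h1, h2]
  rw [Finset.sum_congr rfl fun a _ => hsplit a]
  rw [Finset.sum_sub_distrib, Finset.sum_add_distrib]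
  have hfact : ∀ (f g : Fin N × Fin N → ℝ),
      (∑ a : (Fin N × Fin N) × Fin N × Fin N, f a.1 * g a.2)
      = (∑ y : Fin N × Fin N, f y) * (∑ w : Fin N × Fin N, g w) := by
    intro f g
    rw [Finset.sum_mul_sum]
    rw [Fintype.sum_prod_type]
  have hs1 : (∑ y : Fin N × Fin N, (if y.1 = y.2 then mom μ z y.1 y.2 else 0))
      = ∑ α, mom μ z α α := by
    rw [Fintype.sum_prod_type]
    apply Finset.sum_congr rfl
    intro α₁ _
    rw [Finset.sum_ite_eq Finset.univ α₁ (fun α₂ => mom μ z α₁ α₂)]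
    simp
  have hs2 : (∑ y : Fin N × Fin N, mom μ z y.1 y.2) = 1 := by
    rw [Fintype.sum_prod_type]
    exact mom_total μ z
  rw [hfact (fun y => if y.1 = y.2 then mom μ z y.1 y.2 else 0) (fun w => mom μ z w.1 w.2),
    hfact (fun y => mom μ z y.1 y.2) (fun w => if w.1 = w.2 then mom μ z w.1 w.2 else 0),
    hfact (fun y => if y.1 = y.2 then mom μ z y.1 y.2 else 0)
      (fun w => if w.1 = w.2 then mom μ z w.1 w.2 else 0),
    hs1, hs2]
  ring

end UG2


/-- the mean entangling power of a random diagonal bipartite gate: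
the average of `1 − Tr(μ²)` over uniform phases `φ` and over `ψ₁, ψ₂` — first columns
of two independent Haar-random unitaries — equals `((N−1)/(N+1))²`. -/
theorem mean_entangling_power_diagonal (N : ℕ) (hN : 0 < N)
    [MeasurableSpace (Matrix.unitaryGroup (Fin N) ℂ)]
    [BorelSpace (Matrix.unitaryGroup (Fin N) ℂ)]
    (μ : Measure (Matrix.unitaryGroup (Fin N) ℂ))
    [IsProbabilityMeasure μ] [μ.IsMulLeftInvariant] :
    ((2 * Real.pi : ℂ) ^ (N ^ 2))⁻¹ *
        ∫ φ in Set.univ.pi fun _ : Fin N × Fin N => Set.Icc (0 : ℝ) (2 * Real.pi),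
          ∫ U₁, ∫ U₂,
            (1 - Matrix.trace
              (rdm N φ (fun α => (U₁ : Matrix (Fin N) (Fin N) ℂ) α ⟨0, hN⟩)
                  (fun l => (U₂ : Matrix (Fin N) (Fin N) ℂ) l ⟨0, hN⟩) *
                rdm N φ (fun α => (U₁ : Matrix (Fin N) (Fin N) ℂ) α ⟨0, hN⟩)
                  (fun l => (U₂ : Matrix (Fin N) (Fin N) ℂ) l ⟨0, hN⟩))) ∂μ ∂μ =
      (((N : ℂ) - 1) / ((N : ℂ) + 1)) ^ 2 := by
  classical
  set z : Fin N := ⟨0, hN⟩ with hz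
  set K : Set (Fin N × Fin N → ℝ) :=
    Set.univ.pi fun _ : Fin N × Fin N => Set.Icc (0 : ℝ) (2 * Real.pi) with hK
  -- Step 1: the double unitary integral, for every φ
  have hU : ∀ φ : Fin N × Fin N → ℝ,
      (∫ U₁, ∫ U₂,
        (1 - Matrix.trace
          (rdm N φ (fun α => (U₁ : Matrix (Fin N) (Fin N) ℂ) α z)
              (fun l => (U₂ : Matrix (Fin N) (Fin N) ℂ) l z) *
            rdm N φ (fun α => (U₁ : Matrix (Fin N) (Fin N) ℂ) α z)
              (fun l => (U₂ : Matrix (Fin N) (Fin N) ℂ) l z))) ∂μ ∂μ)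
      = 1 - ∑ a : (Fin N × Fin N) × Fin N × Fin N,
          ((mom μ z a.1.1 a.1.2 : ℝ) : ℂ) * ((mom μ z a.2.1 a.2.2 : ℝ) : ℂ) *
          (∏ p, Complex.exp (Complex.I * (coefE a.1.1 a.1.2 a.2.1 a.2.2 p : ℂ) * (φ p : ℂ))) := by
    intro φ
    have h2 : ∀ U₁ : Matrix.unitaryGroup (Fin N) ℂ,
        (∫ U₂,
          (1 - Matrix.trace
            (rdm N φ (fun α => (U₁ : Matrix (Fin N) (Fin N) ℂ) α z)
                (fun l => (U₂ : Matrix (Fin N) (Fin N) ℂ) l z) *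
              rdm N φ (fun α => (U₁ : Matrix (Fin N) (Fin N) ℂ) α z)
                (fun l => (U₂ : Matrix (Fin N) (Fin N) ℂ) l z))) ∂μ)
        = 1 - ∑ a : (Fin N × Fin N) × Fin N × Fin N,
            (∏ p, Complex.exp (Complex.I * (coefE a.1.1 a.1.2 a.2.1 a.2.2 p : ℂ) * (φ p : ℂ))) *
            ((‖(U₁ : Matrix (Fin N) (Fin N) ℂ) a.1.1 z‖ ^ 2 *
              ‖(U₁ : Matrix (Fin N) (Fin N) ℂ) a.1.2 z‖ ^ 2 : ℝ) : ℂ) *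
            ((mom μ z a.2.1 a.2.2 : ℝ) : ℂ) :=
      fun U₁ => inner2 μ z φ (fun α => (U₁ : Matrix (Fin N) (Fin N) ℂ) α z)
    rw [integral_congr_ae (Filter.Eventually.of_forall h2), inner1 μ z φ]
    congr 1
    exact Finset.sum_congr rfl fun a _ => by ring
  rw [integral_congr_ae (Filter.Eventually.of_forall fun φ => hU φ)]
  -- Step 2: the φ integral
  have hKm : MeasurableSet K := MeasurableSet.univ_pi fun _ => measurableSet_Icc
  have hKvol : volume K = (ENNReal.ofReal (2 * Real.pi)) ^ (N ^ 2) := by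
    rw [hK, MeasureTheory.volume_pi_pi]
    simp only [Real.volume_Icc, sub_zero, Finset.prod_const, Finset.card_univ,
      Fintype.card_prod, Fintype.card_fin]
    rw [← pow_two]
  have hKlt : volume K < ⊤ := by
    rw [hKvol]
    exact ENNReal.pow_lt_top ENNReal.ofReal_lt_top
  have hnorm1 : ∀ (c : ℤ) (t : ℝ), ‖Complex.exp (Complex.I * c * t)‖ = 1 := by
    intro c t
    rw [Complex.norm_exp]
    have : (Complex.I * c * t).re = 0 := by simp [Complex.mul_re]
    rw [this, Real.exp_zero]
  have hbase : ∀ a : (Fin N × Fin N) × Fin N × Fin N,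
      IntegrableOn (fun φ : Fin N × Fin N → ℝ =>
        ∏ p, Complex.exp (Complex.I * (coefE a.1.1 a.1.2 a.2.1 a.2.2 p : ℂ) * (φ p : ℂ)))
        K volume := by
    intro a
    have hcont : Continuous fun φ : Fin N × Fin N → ℝ =>
        ∏ p, Complex.exp (Complex.I * (coefE a.1.1 a.1.2 a.2.1 a.2.2 p : ℂ) * (φ p : ℂ)) := by
      apply continuous_finset_prod
      intro p _
      exact Complex.continuous_exp.comp
        (continuous_const.mul (Complex.continuous_ofReal.comp (continuous_apply p)))
    have h1 : IntegrableOn (fun _ : Fin N × Fin N → ℝ => (1:ℝ)) K volume :=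
      integrableOn_const hKlt.ne
    apply h1.mono' (hcont.aestronglyMeasurable.restrict)
    apply Filter.Eventually.of_forall
    intro φ
    have : ‖∏ p, Complex.exp (Complex.I * (coefE a.1.1 a.1.2 a.2.1 a.2.2 p : ℂ) * (φ p : ℂ))‖
        = 1 := by
      rw [norm_prod, Finset.prod_congr rfl fun p (_ : p ∈ Finset.univ) => hnorm1 _ (φ p),
        Finset.prod_const_one]
    exact le_of_eq this
  rw [integral_sub (integrableOn_const hKlt.ne : IntegrableOn (fun _ => (1 : ℂ)) K volume)
    (integrable_finset_sum Finset.univ fun a _ => (hbase a).const_mul _)]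
  rw [integral_finset_sum Finset.univ fun a _ => (hbase a).const_mul _]
  have hW : ∫ _φ in K, (1 : ℂ) = (((2 * Real.pi) ^ (N ^ 2) : ℝ) : ℂ) := by
    rw [setIntegral_const, Measure.real, hKvol]
    rw [ENNReal.toReal_pow, ENNReal.toReal_ofReal (by positivity)]
    rw [Complex.real_smul, mul_one, Complex.ofReal_pow]
  rw [hW]
  have hterm : ∀ a : (Fin N × Fin N) × Fin N × Fin N,
      (∫ φ in K, (((mom μ z a.1.1 a.1.2 : ℝ) : ℂ) * ((mom μ z a.2.1 a.2.2 : ℝ) : ℂ)) *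
        (∏ p, Complex.exp (Complex.I * (coefE a.1.1 a.1.2 a.2.1 a.2.2 p : ℂ) * (φ p : ℂ))))
      = (((2 * Real.pi) ^ (N ^ 2) : ℝ) : ℂ) *
        (if (a.1.1 = a.1.2 ∨ a.2.1 = a.2.2) then
          ((mom μ z a.1.1 a.1.2 * mom μ z a.2.1 a.2.2 : ℝ) : ℂ) else 0) := by
    intro a
    rw [MeasureTheory.integral_const_mul, hK, cube_exp]
    by_cases hcond : a.1.1 = a.1.2 ∨ a.2.1 = a.2.2
    · rw [if_pos ((coef_zero_iff _ _ _ _).mpr hcond), if_pos hcond]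
      push_cast
      ring
    · rw [if_neg (fun h => hcond ((coef_zero_iff _ _ _ _).mp h)), if_neg hcond]
      ring
  rw [Finset.sum_congr rfl fun a _ => hterm a, ← Finset.mul_sum]
  have hTcast : (∑ a : (Fin N × Fin N) × Fin N × Fin N,
      (if (a.1.1 = a.1.2 ∨ a.2.1 = a.2.2) then
        ((mom μ z a.1.1 a.1.2 * mom μ z a.2.1 a.2.2 : ℝ) : ℂ) else 0))
      = (((∑ a : (Fin N × Fin N) × Fin N × Fin N,
          if (a.1.1 = a.1.2 ∨ a.2.1 = a.2.2) then
            mom μ z a.1.1 a.1.2 * mom μ z a.2.1 a.2.2 else 0) : ℝ) : ℂ) := by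
    rw [Complex.ofReal_sum]
    exact Finset.sum_congr rfl fun a _ =>
      (apply_ite (fun r : ℝ => (r : ℂ)) _ _ _).symm
  rw [hTcast, T_real μ z]
  -- final algebra
  have hs2 := mom_s μ hN z
  set s : ℝ := ∑ α, mom μ z α α with hs_def
  have hXne : (((2 * Real.pi) ^ (N ^ 2) : ℝ) : ℂ) ≠ 0 :=
    Complex.ofReal_ne_zero.mpr (by positivity)
  have hX : ((2 * Real.pi : ℂ)) ^ (N ^ 2) = (((2 * Real.pi) ^ (N ^ 2) : ℝ) : ℂ) := by
    push_cast
    ring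
  rw [hX]
  rw [show (((2 * Real.pi) ^ (N ^ 2) : ℝ) : ℂ)
      - (((2 * Real.pi) ^ (N ^ 2) : ℝ) : ℂ) * ((2 * s - s ^ 2 : ℝ) : ℂ)
      = (((2 * Real.pi) ^ (N ^ 2) : ℝ) : ℂ) * (1 - ((2 * s - s ^ 2 : ℝ) : ℂ)) by ring]
  rw [← mul_assoc, inv_mul_cancel₀ hXne, one_mul]
  -- now : 1 - ↑(2 s - s²) = ((N-1)/(N+1))²
  have hNR : ((N : ℝ) + 1) ≠ 0 := by positivity
  have hsval : s = 2 / ((N : ℝ) + 1) := by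
    field_simp
    linarith [hs2]
  have hreal : (1 : ℝ) - (2 * s - s ^ 2) = (((N : ℝ) - 1) / ((N : ℝ) + 1)) ^ 2 := by
    rw [hsval]
    field_simp
    ring
  have hfin : (1 : ℂ) - ((2 * s - s ^ 2 : ℝ) : ℂ) = (((1 : ℝ) - (2 * s - s ^ 2) : ℝ) : ℂ) := by
    push_cast
    ring
  rw [hfin, hreal]
  push_cast
  rw [div_pow]
end

section
/- Let U be a unitary matrix of order N², with rows and columns indexed by pairs in {1,…,N}². Then the reshuffled matrix U^R has rank 1 if and only if U is a product gate, i.e., there exist unitary N×N matrices U_A and U_B such that U = U_A ⊗ U_B (Kronecker product). -/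
open Matrix Kronecker

lemma aux_mulVec_vecMulVec {ι κ : Type*} [Fintype κ] (v : ι → ℂ) (w : κ → ℂ) (x : κ → ℂ) :
    (Matrix.vecMulVec v w) *ᵥ x = (w ⬝ᵥ x) • v := by
  ext i
  simp [Matrix.mulVec, Matrix.vecMulVec_apply, dotProduct, Finset.sum_mul,
    Finset.mul_sum, mul_comm, mul_assoc, mul_left_comm]

lemma aux_rank_eq_one_iff {ι κ : Type*} [Fintype ι] [Fintype κ] [DecidableEq κ]
    (M : Matrix ι κ ℂ) :
    M.rank = 1 ↔ ∃ (v : ι → ℂ) (w : κ → ℂ), v ≠ 0 ∧ w ≠ 0 ∧ M = Matrix.vecMulVec v w := by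
  constructor
  · intro h
    have h' := h
    rw [Matrix.rank, finrank_eq_one_iff'] at h'
    obtain ⟨⟨v, hvmem⟩, hv0, hv⟩ := h'
    choose w hw using fun j => hv ⟨M.mulVecLin (Pi.single j 1), LinearMap.mem_range_self _ _⟩
    have hw' : ∀ j i, w j * v i = M i j := by
      intro j i
      have := congrArg (fun z => (z : (ι → ℂ)) i) (Subtype.ext_iff.mp (hw j))
      simpa [Matrix.mulVecLin_apply] using this
    have hM : M = Matrix.vecMulVec v w := by
      ext i j
      rw [Matrix.vecMulVec_apply, mul_comm, hw']
    refine ⟨v, w, by simpa [Submodule.coe_eq_zero] using hv0, ?_, hM⟩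
    intro hw0
    have hM0 : M = 0 := by
      rw [hM, hw0]; ext i j; simp [Matrix.vecMulVec_apply]
    rw [hM0, Matrix.rank_zero] at h
    exact one_ne_zero h.symm
  · rintro ⟨v, w, hv, hw, rfl⟩
    have hrange : LinearMap.range (Matrix.vecMulVec v w).mulVecLin = Submodule.span ℂ {v} := by
      apply le_antisymm
      · rintro y ⟨x, rfl⟩
        rw [Matrix.mulVecLin_apply, aux_mulVec_vecMulVec]
        exact Submodule.smul_mem _ _ (Submodule.mem_span_singleton_self v)
      · rw [Submodule.span_le, Set.singleton_subset_iff]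
        obtain ⟨j₀, hj₀⟩ := Function.ne_iff.mp hw
        refine ⟨Pi.single j₀ (w j₀)⁻¹, ?_⟩
        rw [Matrix.mulVecLin_apply, aux_mulVec_vecMulVec]
        simp [dotProduct, Pi.single_apply, mul_inv_cancel₀ hj₀]
    rw [Matrix.rank, hrange]
    exact finrank_span_singleton hv

lemma aux_conjTranspose_kronecker {l m n p : Type*}
    (A : Matrix l m ℂ) (B : Matrix n p ℂ) :
    (A ⊗ₖ B)ᴴ = Aᴴ ⊗ₖ Bᴴ := by
  ext ⟨a, b⟩ ⟨c, d⟩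
  simp [Matrix.conjTranspose_apply, Matrix.kroneckerMap_apply]

/-- Reshuffling of a matrix acting on a bipartite index set:
`(X^R)_{(m,μ),(n,ν)} = X_{(m,n),(μ,ν)}`. -/
def reshuffle {N : ℕ} (X : Matrix (Fin N × Fin N) (Fin N × Fin N) ℂ) :
    Matrix (Fin N × Fin N) (Fin N × Fin N) ℂ :=
  Matrix.of fun p q => X (p.1, q.1) (p.2, q.2)

/-- a unitary `U` of order `N²` has reshuffling of rank 1 if and only if
it is a product gate `U = U_A ⊗ U_B` with `U_A`, `U_B` unitary of order `N`. -/
theorem reshuffle_rank_one_iff_product_gate (N : ℕ) (hN : 0 < N)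
    (U : Matrix (Fin N × Fin N) (Fin N × Fin N) ℂ)
    (hU : U ∈ Matrix.unitaryGroup (Fin N × Fin N) ℂ) :
    (reshuffle U).rank = 1 ↔
      ∃ UA UB : Matrix (Fin N) (Fin N) ℂ,
        UA ∈ Matrix.unitaryGroup (Fin N) ℂ ∧ UB ∈ Matrix.unitaryGroup (Fin N) ℂ ∧
        U = UA ⊗ₖ UB := by
  haveI : NeZero N := ⟨hN.ne'⟩
  constructor
  · intro h
    rw [aux_rank_eq_one_iff] at h
    obtain ⟨v, w, hv, hw, hvw⟩ := h
    set A : Matrix (Fin N) (Fin N) ℂ := Matrix.of fun m n => v (m, n) with hAdef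
    set B : Matrix (Fin N) (Fin N) ℂ := Matrix.of fun μ ν => w (μ, ν) with hBdef
    have hUAB : U = A ⊗ₖ B := by
      ext ⟨m, μ⟩ ⟨n, ν⟩
      have := congrFun (congrFun hvw (m, n)) (μ, ν)
      simpa [reshuffle, Matrix.vecMulVec_apply, Matrix.kroneckerMap_apply, hAdef, hBdef] using this
    have h1 : (Aᴴ * A) ⊗ₖ (Bᴴ * B) = 1 := by
      have h2 := Matrix.mem_unitaryGroup_iff'.mp hU
      rw [hUAB, Matrix.star_eq_conjTranspose, aux_conjTranspose_kronecker,
        ← Matrix.mul_kronecker_mul] at h2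
      exact h2
    have hEntry : ∀ m μ n ν, (Aᴴ * A) m n * (Bᴴ * B) μ ν
        = if ((m, μ) : Fin N × Fin N) = (n, ν) then 1 else 0 := by
      intro m μ n ν
      have := congrFun (congrFun h1 (m, μ)) (n, ν)
      rwa [Matrix.one_apply] at this
    set μ₀ : Fin N := 0
    set c : ℂ := (Bᴴ * B) μ₀ μ₀ with hcdef
    have hc1 : ∀ m, (Aᴴ * A) m m * c = 1 := by
      intro m; simpa using hEntry m μ₀ m μ₀
    have hc0 : c ≠ 0 := by
      intro h0
      have := hc1 0
      rw [h0, mul_zero] at this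
      exact zero_ne_one this
    have hMdiag : ∀ m, (Aᴴ * A) m m = c⁻¹ := fun m =>
      eq_inv_of_mul_eq_one_left (hc1 m)
    have hM : Aᴴ * A = c⁻¹ • 1 := by
      ext m n
      rcases eq_or_ne m n with rfl | hmn
      · simp [hMdiag m, Matrix.one_apply]
      · have := hEntry m μ₀ n μ₀
        rw [if_neg (by simp [hmn])] at this
        have := (mul_eq_zero.mp this).resolve_right hc0
        simp [this, Matrix.one_apply, hmn]
    have hNm : Bᴴ * B = c • 1 := by
      ext μ ν
      have := hEntry 0 μ 0 ν
      rw [hMdiag 0] at this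
      rcases eq_or_ne μ ν with rfl | hμν
      · rw [if_pos rfl] at this
        have : (Bᴴ * B) μ μ = c := by
          field_simp at this
          simpa using this
        simp [this, Matrix.one_apply]
      · rw [if_neg (by simp [hμν])] at this
        have := (mul_eq_zero.mp this).resolve_left (inv_ne_zero hc0)
        simp [this, Matrix.one_apply, hμν]
    -- c is a positive real
    set r : ℝ := ∑ k, Complex.normSq (B k μ₀) with hrdef
    have hcr : c = (r : ℂ) := by
      rw [hcdef, Matrix.mul_apply, hrdef, Complex.ofReal_sum]
      refine Finset.sum_congr rfl fun k _ => ?_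
      rw [Matrix.conjTranspose_apply, Complex.star_def, mul_comm, Complex.mul_conj]
    have hr0 : r ≠ 0 := by
      intro h0; exact hc0 (by rw [hcr, h0, Complex.ofReal_zero])
    have hrpos : 0 < r :=
      lt_of_le_of_ne (Finset.sum_nonneg fun k _ => Complex.normSq_nonneg _) (Ne.symm hr0)
    set t : ℝ := Real.sqrt r with htdef
    have ht2 : (t : ℂ) * (t : ℂ) = (r : ℂ) := by
      exact_mod_cast congrArg (Complex.ofReal) (Real.mul_self_sqrt hrpos.le)
    have ht0 : (t : ℂ) ≠ 0 :=
      Complex.ofReal_ne_zero.mpr (Real.sqrt_ne_zero'.mpr hrpos)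
    refine ⟨(t : ℂ) • A, (t : ℂ)⁻¹ • B, ?_, ?_, ?_⟩
    · rw [Matrix.mem_unitaryGroup_iff']
      rw [star_smul, Matrix.star_eq_conjTranspose, Matrix.smul_mul, Matrix.mul_smul, hM,
        smul_smul, smul_smul]
      have : star ((t : ℂ)) = (t : ℂ) := by
        rw [Complex.star_def, Complex.conj_ofReal]
      rw [this, ht2, hcr]
      rw [← Complex.ofReal_inv, ← Complex.ofReal_mul, mul_inv_cancel₀ hr0]
      simp
    · rw [Matrix.mem_unitaryGroup_iff']
      rw [star_smul, Matrix.star_eq_conjTranspose, Matrix.smul_mul, Matrix.mul_smul, hNm,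
        smul_smul, smul_smul]
      have : star ((t : ℂ)⁻¹) = (t : ℂ)⁻¹ := by
        rw [star_inv₀, Complex.star_def, Complex.conj_ofReal]
      rw [this, ← mul_inv, ht2, hcr]
      rw [inv_mul_cancel₀ (Complex.ofReal_ne_zero.mpr hr0)]
      simp
    · rw [hUAB, Matrix.smul_kronecker, Matrix.kronecker_smul, smul_smul,
        mul_inv_cancel₀ ht0, one_smul]
  · rintro ⟨UA, UB, hA, hB, rfl⟩
    rw [aux_rank_eq_one_iff]
    refine ⟨fun p => UA p.1 p.2, fun p => UB p.1 p.2, ?_, ?_, ?_⟩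
    · intro h0
      have hUA0 : UA = 0 := by
        ext m n; exact congrFun h0 (m, n)
      have := Matrix.mem_unitaryGroup_iff'.mp hA
      rw [hUA0] at this
      simp at this
    · intro h0
      have hUB0 : UB = 0 := by
        ext m n; exact congrFun h0 (m, n)
      have := Matrix.mem_unitaryGroup_iff'.mp hB
      rw [hUB0] at this
      simp at this
    · ext ⟨m, μ⟩ ⟨n, ν⟩
      simp [reshuffle, Matrix.vecMulVec_apply, Matrix.kroneckerMap_apply]
end
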